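/- arXiv:1404.5945 — 2 statements merged into one kernel-verified Lean document; each statement's English description precedes it below -/
import Mathlib

section
/- Let A, B, X, Y be finitely-valued random variables on Ω and ε ≥ 0 a real number. Assume: (i) A is independent of the pair (B, X); (ii) X and Y are conditionally independent given the pair (A, B); and (iii) I(B ; X) ≤ ε. Then I(A ; X | Y) ≤ ε. -/
open MeasureTheory ProbabilityTheory

/-- Shannon entropy of a finitely-valued random variable `X` under `μ`. -/
noncomputable def finEntropy {Ω : Type*} [MeasurableSpace Ω] (μ : Measure Ω)
    {S : Type*} [Fintype S] (X : Ω → S) : ℝ :=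
  ∑ s : S, Real.negMulLog ((μ (X ⁻¹' {s})).toReal)

/-- Mutual information `I(X ; Y)` of finitely-valued random variables under `μ`. -/
noncomputable def finMutualInfo {Ω : Type*} [MeasurableSpace Ω] (μ : Measure Ω)
    {S T : Type*} [Fintype S] [Fintype T] (X : Ω → S) (Y : Ω → T) : ℝ :=
  finEntropy μ X + finEntropy μ Y - finEntropy μ (fun ω => (X ω, Y ω))

/-- Conditional mutual information `I(X ; Y | Z)` of finitely-valued random
variables under `μ`. -/
noncomputable def finCondMutualInfo {Ω : Type*} [MeasurableSpace Ω] (μ : Measure Ω)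
    {S T U : Type*} [Fintype S] [Fintype T] [Fintype U]
    (X : Ω → S) (Y : Ω → T) (Z : Ω → U) : ℝ :=
  finEntropy μ (fun ω => (X ω, Z ω)) + finEntropy μ (fun ω => (Y ω, Z ω))
    - finEntropy μ (fun ω => (X ω, Y ω, Z ω)) - finEntropy μ Z

/-- `X` and `Y` are conditionally independent given `Z` (for finitely-valued
random variables this pointwise product formula is the usual definition). -/
def CondIndepFinRV {Ω : Type*} [MeasurableSpace Ω] (μ : Measure Ω)
    {S T U : Type*} (X : Ω → S) (Y : Ω → T) (Z : Ω → U) : Prop :=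
  ∀ (s : S) (t : T) (u : U),
    μ (X ⁻¹' {s} ∩ Y ⁻¹' {t} ∩ Z ⁻¹' {u}) * μ (Z ⁻¹' {u}) =
      μ (X ⁻¹' {s} ∩ Z ⁻¹' {u}) * μ (Y ⁻¹' {t} ∩ Z ⁻¹' {u})

/-- `U` is uniformly distributed on the finite type `G` under `μ`. -/
def IsUniformRV {Ω : Type*} [MeasurableSpace Ω] (μ : Measure Ω)
    {G : Type*} [Fintype G] (U : Ω → G) : Prop :=
  ∀ g : G, μ (U ⁻¹' {g}) = (Fintype.card G : ENNReal)⁻¹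

section Aux
open scoped Classical

section Abstract
variable {T : Type*} [Fintype T]

noncomputable def margF (p : T → ℝ) {V : Type*} (g : T → V) (v : V) : ℝ :=
  ∑ t, if g t = v then p t else 0

lemma margF_comp (p : T → ℝ) {V V' : Type*} [Fintype V] (g : T → V) (f : V → V') (v' : V') :
    margF p (fun t => f (g t)) v' = ∑ v, if f v = v' then margF p g v else 0 := by
  have h : ∀ v : V, (if f v = v' then margF p g v else 0)
      = ∑ t, if g t = v then (if f v = v' then p t else 0) else 0 := by
    intro v
    by_cases h : f v = v' <;> simp [h, margF]
  rw [Finset.sum_congr rfl fun v _ => h v, Finset.sum_comm]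
  unfold margF
  refine Finset.sum_congr rfl fun t _ => ?_
  rw [Finset.sum_ite_eq]
  simp

lemma sum_ite_pull {β : Type*} [Fintype β] (P : Prop) [Decidable P] (f : β → ℝ) :
    ∑ b, (if P then f b else 0) = if P then ∑ b, f b else 0 := by
  split <;> simp

variable (p : T → ℝ) {U V W : Type*} [Fintype U] [Fintype V] [Fintype W]
  (u : T → U) (v : T → V) (w : T → W)

lemma margF_pair_fst (s : U) :
    margF p u s = ∑ r, margF p (fun t => (u t, v t)) (s, r) := by
  have h := margF_comp p (fun t => (u t, v t)) (fun z => z.1) s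
  rw [show (fun t => (fun z : U × V => z.1) (u t, v t)) = u from rfl] at h
  rw [h]
  simp only [Fintype.sum_prod_type]
  rw [Finset.sum_congr rfl fun x (_ : x ∈ Finset.univ) => sum_ite_pull (x = s)
      (fun x_1 => margF p (fun t => (u t, v t)) (x, x_1)),
    Finset.sum_ite_eq' Finset.univ s]
  simp

lemma margF_pair_snd (r : V) :
    margF p v r = ∑ s, margF p (fun t => (u t, v t)) (s, r) := by
  have h := margF_comp p (fun t => (u t, v t)) (fun z => z.2) r
  rw [show (fun t => (fun z : U × V => z.2) (u t, v t)) = v from rfl] at h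
  rw [h]
  simp only [Fintype.sum_prod_type]
  refine Finset.sum_congr rfl fun s' _ => ?_
  rw [Finset.sum_ite_eq' Finset.univ r]
  simp

lemma margF_triple_mid (s : U) (r : W) :
    margF p (fun t => (u t, w t)) (s, r)
      = ∑ t', margF p (fun t => (u t, v t, w t)) (s, t', r) := by
  have h := margF_comp p (fun t => (u t, v t, w t)) (fun z => (z.1, z.2.2)) (s, r)
  rw [show (fun t => (fun z : U × V × W => (z.1, z.2.2)) (u t, v t, w t))
      = (fun t => (u t, w t)) from rfl] at h
  rw [h]
  simp only [Fintype.sum_prod_type, Prod.mk.injEq, ite_and]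
  have h1 : ∀ (x : U) (b : V), (∑ c : W, if x = s then (if c = r then
      margF p (fun t => (u t, v t, w t)) (x, b, c) else 0) else 0)
      = if x = s then (∑ c : W, if c = r then
        margF p (fun t => (u t, v t, w t)) (x, b, c) else 0) else 0 :=
    fun x b => sum_ite_pull _ _
  rw [Finset.sum_congr rfl fun x (_ : x ∈ Finset.univ) => Finset.sum_congr rfl
      fun b (_ : b ∈ Finset.univ) => h1 x b]
  rw [Finset.sum_congr rfl fun x (_ : x ∈ Finset.univ) => sum_ite_pull (x = s) _,
    Finset.sum_ite_eq' Finset.univ s]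
  simp only [Finset.mem_univ, if_true]
  refine Finset.sum_congr rfl fun t' _ => ?_
  rw [Finset.sum_ite_eq' Finset.univ r]
  simp

end Abstract

section Ent
variable {T : Type*} [Fintype T]

noncomputable def entF (p : T → ℝ) {V : Type*} [Fintype V] (g : T → V) : ℝ :=
  ∑ v, Real.negMulLog (margF p g v)

lemma margF_nonneg (p : T → ℝ) (hp : ∀ t, 0 ≤ p t) {V : Type*} (g : T → V) (v : V) :
    0 ≤ margF p g v := by
  refine Finset.sum_nonneg fun t _ => ?_
  split <;> simp [hp t]

lemma sum_margF (p : T → ℝ) {V : Type*} [Fintype V] (g : T → V) :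
    ∑ v, margF p g v = ∑ t, p t := by
  unfold margF
  rw [Finset.sum_comm]
  exact Finset.sum_congr rfl fun t _ => by rw [Finset.sum_ite_eq]; simp

lemma entF_congr_inj (p : T → ℝ) {V V' : Type*} [Fintype V] [Fintype V']
    (g : T → V) (f : V → V') (hf : Function.Injective f) :
    entF p (fun t => f (g t)) = entF p g := by
  unfold entF
  have hvanish : ∀ v' ∈ Finset.univ, v' ∉ Finset.univ.image f →
      Real.negMulLog (margF p (fun t => f (g t)) v') = 0 := by
    intro v' _ hv'
    have : margF p (fun t => f (g t)) v' = 0 := by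
      refine Finset.sum_eq_zero fun t _ => ?_
      have : f (g t) ≠ v' := fun h => hv' (Finset.mem_image.2 ⟨g t, Finset.mem_univ _, h⟩)
      simp [this]
    simp [this, Real.negMulLog_zero]
  rw [← Finset.sum_subset (Finset.subset_univ (Finset.univ.image f)) hvanish,
    Finset.sum_image (fun a _ b _ h => hf h)]
  refine Finset.sum_congr rfl fun v _ => ?_
  congr 1
  unfold margF
  exact Finset.sum_congr rfl fun t _ => by
    simp [hf.eq_iff]

lemma entF_unit (p : T → ℝ) (hs : ∑ t, p t = 1) :
    entF p (fun _ : T => PUnit.unit) = 0 := by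
  unfold entF
  have : margF p (fun _ : T => PUnit.unit) PUnit.unit = 1 := by
    unfold margF; simpa using hs
  rw [Fintype.sum_unique, this, Real.negMulLog_one]

variable (p : T → ℝ) {U V W : Type*} [Fintype U] [Fintype V] [Fintype W]

lemma entF_pair_of_indep (hs : ∑ t, p t = 1) (u : T → U) (v : T → V)
    (h : ∀ s r, margF p (fun x => (u x, v x)) (s, r) = margF p u s * margF p v r) :
    entF p (fun x => (u x, v x)) = entF p u + entF p v := by
  unfold entF
  rw [Fintype.sum_prod_type]
  have : ∀ s r, Real.negMulLog (margF p (fun x => (u x, v x)) (s, r))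
      = margF p v r * Real.negMulLog (margF p u s)
        + margF p u s * Real.negMulLog (margF p v r) := by
    intro s r; rw [h s r, Real.negMulLog_mul]
  simp_rw [this, Finset.sum_add_distrib, ← Finset.sum_mul, ← Finset.mul_sum]
  rw [← Finset.sum_mul, sum_margF p u, sum_margF p v, hs, one_mul, one_mul]

lemma sum_rot {A B C : Type*} [Fintype A] [Fintype B] [Fintype C] (f : A → B → C → ℝ) :
    ∑ a, ∑ b, ∑ c, f a b c = ∑ c, ∑ a, ∑ b, f a b c := by
  rw [Finset.sum_congr rfl fun a (_ : a ∈ Finset.univ) =>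
    Finset.sum_comm (s := Finset.univ) (t := Finset.univ) (f := fun b c => f a b c)]
  exact Finset.sum_comm

lemma entF_triple_of_condIndep (hp : ∀ t, 0 ≤ p t)
    (u : T → U) (v : T → V) (w : T → W)
    (h : ∀ s t r, margF p (fun x => (u x, v x, w x)) (s, t, r) * margF p w r
      = margF p (fun x => (u x, w x)) (s, r) * margF p (fun x => (v x, w x)) (t, r)) :
    entF p (fun x => (u x, v x, w x))
      = entF p (fun x => (u x, w x)) + entF p (fun x => (v x, w x)) - entF p w := by
  set m3 := margF p (fun x => (u x, v x, w x)) with hm3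
  set ma := margF p (fun x => (u x, w x)) with hma
  set mb := margF p (fun x => (v x, w x)) with hmb
  set mc := margF p w with hmc
  have c1 : ∀ s r, ∑ t', m3 (s, t', r) = ma (s, r) :=
    fun s r => (margF_triple_mid p u v w s r).symm
  have c2 : ∀ r, ∑ t', mb (t', r) = mc r :=
    fun r => (margF_pair_snd p v w r).symm
  have c3 : ∀ r, ∑ s, ma (s, r) = mc r :=
    fun r => (margF_pair_snd p u w r).symm
  have hma0 : ∀ s r, 0 ≤ ma (s, r) := fun s r => margF_nonneg p hp _ _
  have hmb0 : ∀ t r, 0 ≤ mb (t, r) := fun t r => margF_nonneg p hp _ _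
  have hm30 : ∀ s t r, 0 ≤ m3 (s, t, r) := fun s t r => margF_nonneg p hp _ _
  have key : ∀ r, ∑ s, ∑ t, Real.negMulLog (m3 (s, t, r))
      = (∑ s, Real.negMulLog (ma (s, r))) + (∑ t, Real.negMulLog (mb (t, r)))
        - Real.negMulLog (mc r) := by
    intro r
    by_cases hc : mc r = 0
    · have ha0 : ∀ s, ma (s, r) = 0 := by
        have := (Finset.sum_eq_zero_iff_of_nonneg (fun s _ => hma0 s r)).1
          ((c3 r).trans hc)
        exact fun s => this s (Finset.mem_univ s)
      have hb0 : ∀ t, mb (t, r) = 0 := by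
        have := (Finset.sum_eq_zero_iff_of_nonneg (fun t _ => hmb0 t r)).1
          ((c2 r).trans hc)
        exact fun t => this t (Finset.mem_univ t)
      have h30 : ∀ s t, m3 (s, t, r) = 0 := by
        intro s t
        have := (Finset.sum_eq_zero_iff_of_nonneg (fun t _ => hm30 s t r)).1
          ((c1 s r).trans (ha0 s))
        exact this t (Finset.mem_univ t)
      simp [ha0, hb0, h30, hc, Real.negMulLog_zero]
    · have E1 : ∀ s t, Real.negMulLog (m3 (s, t, r) * mc r)
          = mc r * Real.negMulLog (m3 (s, t, r))
            + m3 (s, t, r) * Real.negMulLog (mc r) := fun s t => Real.negMulLog_mul _ _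
      have E2 : ∀ s t, Real.negMulLog (m3 (s, t, r) * mc r)
          = mb (t, r) * Real.negMulLog (ma (s, r))
            + ma (s, r) * Real.negMulLog (mb (t, r)) := by
        intro s t; rw [h s t r, Real.negMulLog_mul]
      have hsum : ∑ s, ∑ t, (mc r * Real.negMulLog (m3 (s, t, r))
            + m3 (s, t, r) * Real.negMulLog (mc r))
          = ∑ s, ∑ t, (mb (t, r) * Real.negMulLog (ma (s, r))
            + ma (s, r) * Real.negMulLog (mb (t, r))) := by
        refine Finset.sum_congr rfl fun s _ => Finset.sum_congr rfl fun t _ => ?_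
        rw [← E1, ← E2]
      have lhs_eq : ∑ s, ∑ t, (mc r * Real.negMulLog (m3 (s, t, r))
            + m3 (s, t, r) * Real.negMulLog (mc r))
          = mc r * (∑ s, ∑ t, Real.negMulLog (m3 (s, t, r)))
            + mc r * Real.negMulLog (mc r) := by
        simp_rw [Finset.sum_add_distrib, ← Finset.sum_mul, ← Finset.mul_sum]
        congr 1
        rw [Finset.sum_congr rfl fun s (_ : s ∈ Finset.univ) => c1 s r, c3 r]
      have rhs_eq : ∑ s, ∑ t, (mb (t, r) * Real.negMulLog (ma (s, r))
            + ma (s, r) * Real.negMulLog (mb (t, r)))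
          = mc r * (∑ s, Real.negMulLog (ma (s, r)))
            + mc r * (∑ t, Real.negMulLog (mb (t, r))) := by
        simp_rw [Finset.sum_add_distrib, ← Finset.mul_sum, ← Finset.sum_mul]
        rw [c2 r, c3 r, ← Finset.mul_sum]
      have hmain := hsum
      rw [lhs_eq, rhs_eq] at hmain
      have hcanc := mul_left_cancel₀ hc
        (show mc r * ((∑ s, ∑ t, Real.negMulLog (m3 (s, t, r))) + Real.negMulLog (mc r))
          = mc r * ((∑ s, Real.negMulLog (ma (s, r))) + (∑ t, Real.negMulLog (mb (t, r))))
          by ring_nf; ring_nf at hmain; linarith)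
      linarith
  have eq3 : entF p (fun x => (u x, v x, w x))
      = ∑ r, ∑ s, ∑ t, Real.negMulLog (m3 (s, t, r)) := by
    unfold entF
    simp only [Fintype.sum_prod_type]
    exact sum_rot _
  have eqa : entF p (fun x => (u x, w x)) = ∑ r, ∑ s, Real.negMulLog (ma (s, r)) := by
    unfold entF
    simp only [Fintype.sum_prod_type]
    exact Finset.sum_comm
  have eqb : entF p (fun x => (v x, w x)) = ∑ r, ∑ t, Real.negMulLog (mb (t, r)) := by
    unfold entF
    simp only [Fintype.sum_prod_type]
    exact Finset.sum_comm
  have eqc : entF p w = ∑ r, Real.negMulLog (mc r) := rfl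
  rw [eq3, eqa, eqb, eqc, Finset.sum_congr rfl fun r (_ : r ∈ Finset.univ) => key r]
  rw [Finset.sum_sub_distrib, Finset.sum_add_distrib]

lemma gibbs_pt {q a b c : ℝ} (hq : 0 ≤ q) (hb : 0 ≤ b) (hqa : q ≤ a) (hqb : q ≤ b)
    (hac : a ≤ c) :
    q - a * b / c ≤ q * (Real.log q + Real.log c - Real.log a - Real.log b) := by
  rcases eq_or_lt_of_le hq with h0 | hq0
  · have habc : 0 ≤ a * b / c :=
      div_nonneg (mul_nonneg (le_trans hq hqa) hb) (le_trans (le_trans hq hqa) hac)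
    rw [← h0]
    simpa using habc
  · have ha0 : 0 < a := lt_of_lt_of_le hq0 hqa
    have hb0 : 0 < b := lt_of_lt_of_le hq0 hqb
    have hc0 : 0 < c := lt_of_lt_of_le ha0 hac
    have hlog : Real.log (a * b / (q * c)) ≤ a * b / (q * c) - 1 :=
      Real.log_le_sub_one_of_pos (by positivity)
    have hexp : Real.log (a * b / (q * c))
        = Real.log a + Real.log b - Real.log q - Real.log c := by
      rw [Real.log_div (by positivity) (by positivity), Real.log_mul ha0.ne' hb0.ne',
        Real.log_mul hq0.ne' hc0.ne']
      ring
    have h2 : q * (Real.log a + Real.log b - Real.log q - Real.log c)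
        ≤ q * (a * b / (q * c) - 1) :=
      mul_le_mul_of_nonneg_left (hexp ▸ hlog) hq
    have h3 : q * (a * b / (q * c) - 1) = a * b / c - q := by
      field_simp
    have h4 : q * (Real.log q + Real.log c - Real.log a - Real.log b)
        = -(q * (Real.log a + Real.log b - Real.log q - Real.log c)) := by ring
    linarith [h2, h3, h4]

lemma entF_submod (hp : ∀ t, 0 ≤ p t)
    (u : T → U) (v : T → V) (w : T → W) :
    entF p (fun x => (u x, v x, w x)) + entF p w
      ≤ entF p (fun x => (u x, w x)) + entF p (fun x => (v x, w x)) := by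
  set m3 := margF p (fun x => (u x, v x, w x)) with hm3
  set ma := margF p (fun x => (u x, w x)) with hma
  set mb := margF p (fun x => (v x, w x)) with hmb
  set mc := margF p w with hmc
  have c1 : ∀ s r, ∑ t', m3 (s, t', r) = ma (s, r) :=
    fun s r => (margF_triple_mid p u v w s r).symm
  have c1' : ∀ t r, ∑ s, m3 (s, t, r) = mb (t, r) :=
    fun t r => (margF_pair_snd p u (fun x => (v x, w x)) (t, r)).symm
  have c2 : ∀ r, ∑ t', mb (t', r) = mc r :=
    fun r => (margF_pair_snd p v w r).symm
  have c3 : ∀ r, ∑ s, ma (s, r) = mc r :=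
    fun r => (margF_pair_snd p u w r).symm
  have hma0 : ∀ s r, 0 ≤ ma (s, r) := fun s r => margF_nonneg p hp _ _
  have hmb0 : ∀ t r, 0 ≤ mb (t, r) := fun t r => margF_nonneg p hp _ _
  have hm30 : ∀ s t r, 0 ≤ m3 (s, t, r) := fun s t r => margF_nonneg p hp _ _
  have key : ∀ r, (∑ s, ∑ t, Real.negMulLog (m3 (s, t, r))) + Real.negMulLog (mc r)
      ≤ (∑ s, Real.negMulLog (ma (s, r))) + (∑ t, Real.negMulLog (mb (t, r))) := by
    intro r
    by_cases hc : mc r = 0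
    · have ha0 : ∀ s, ma (s, r) = 0 := by
        have := (Finset.sum_eq_zero_iff_of_nonneg (fun s _ => hma0 s r)).1
          ((c3 r).trans hc)
        exact fun s => this s (Finset.mem_univ s)
      have hb0 : ∀ t, mb (t, r) = 0 := by
        have := (Finset.sum_eq_zero_iff_of_nonneg (fun t _ => hmb0 t r)).1
          ((c2 r).trans hc)
        exact fun t => this t (Finset.mem_univ t)
      have h30 : ∀ s t, m3 (s, t, r) = 0 := by
        intro s t
        have := (Finset.sum_eq_zero_iff_of_nonneg (fun t _ => hm30 s t r)).1
          ((c1 s r).trans (ha0 s))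
        exact this t (Finset.mem_univ t)
      simp [ha0, hb0, h30, hc, Real.negMulLog_zero]
    · have hc0 : 0 < mc r := lt_of_le_of_ne (margF_nonneg p hp _ _) (Ne.symm hc)
      -- pointwise Gibbs bound
      have hpt : ∀ s t, m3 (s, t, r) - ma (s, r) * mb (t, r) / mc r
          ≤ m3 (s, t, r) * (Real.log (m3 (s, t, r)) + Real.log (mc r)
            - Real.log (ma (s, r)) - Real.log (mb (t, r))) := by
        intro s t
        refine gibbs_pt (hm30 s t r) (hmb0 t r) ?_ ?_ ?_
        · rw [← c1 s r]
          exact Finset.single_le_sum (fun t' _ => hm30 s t' r) (Finset.mem_univ t)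
        · rw [← c1' t r]
          exact Finset.single_le_sum (fun s' _ => hm30 s' t r) (Finset.mem_univ s)
        · rw [← c3 r]
          exact Finset.single_le_sum (fun s' _ => hma0 s' r) (Finset.mem_univ s)
      -- the sum of the left sides is zero
      have hzero : ∑ s, ∑ t, (m3 (s, t, r) - ma (s, r) * mb (t, r) / mc r) = 0 := by
        have e1 : ∀ s, ∑ t, (m3 (s, t, r) - ma (s, r) * mb (t, r) / mc r)
            = ma (s, r) - ma (s, r) := by
          intro s
          rw [Finset.sum_sub_distrib, c1 s r]
          congr 1
          have : ∀ t, ma (s, r) * mb (t, r) / mc r = ma (s, r) / mc r * mb (t, r) := by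
            intro t; ring
          rw [Finset.sum_congr rfl fun t _ => this t, ← Finset.mul_sum, c2 r]
          field_simp
        rw [Finset.sum_congr rfl fun s (_ : s ∈ Finset.univ) => e1 s]
        simp
      have hge : 0 ≤ ∑ s, ∑ t, m3 (s, t, r) * (Real.log (m3 (s, t, r)) + Real.log (mc r)
          - Real.log (ma (s, r)) - Real.log (mb (t, r))) := by
        rw [← hzero]
        exact Finset.sum_le_sum fun s _ => Finset.sum_le_sum fun t _ => hpt s t
      -- rewrite the big sum into entropies
      have expand : ∑ s, ∑ t, m3 (s, t, r) * (Real.log (m3 (s, t, r)) + Real.log (mc r)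
          - Real.log (ma (s, r)) - Real.log (mb (t, r)))
          = (∑ s, Real.negMulLog (ma (s, r))) + (∑ t, Real.negMulLog (mb (t, r)))
            - (∑ s, ∑ t, Real.negMulLog (m3 (s, t, r))) - Real.negMulLog (mc r) := by
        have e1 : ∑ s, ∑ t, m3 (s, t, r) * Real.log (m3 (s, t, r))
            = - ∑ s, ∑ t, Real.negMulLog (m3 (s, t, r)) := by
          simp [Real.negMulLog, Finset.sum_neg_distrib]
        have e2 : ∑ s, ∑ t, m3 (s, t, r) * Real.log (mc r) = - Real.negMulLog (mc r) := by
          simp_rw [← Finset.sum_mul]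
          rw [Finset.sum_congr rfl fun s (_ : s ∈ Finset.univ) => c1 s r, c3 r]
          simp [Real.negMulLog]
        have e3 : ∑ s, ∑ t, m3 (s, t, r) * Real.log (ma (s, r))
            = - ∑ s, Real.negMulLog (ma (s, r)) := by
          have : ∀ s, ∑ t, m3 (s, t, r) * Real.log (ma (s, r))
              = ma (s, r) * Real.log (ma (s, r)) := by
            intro s; rw [← Finset.sum_mul, c1 s r]
          rw [Finset.sum_congr rfl fun s (_ : s ∈ Finset.univ) => this s]
          simp [Real.negMulLog, Finset.sum_neg_distrib]
        have e4 : ∑ s, ∑ t, m3 (s, t, r) * Real.log (mb (t, r))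
            = - ∑ t, Real.negMulLog (mb (t, r)) := by
          rw [Finset.sum_comm]
          have : ∀ t, ∑ s, m3 (s, t, r) * Real.log (mb (t, r))
              = mb (t, r) * Real.log (mb (t, r)) := by
            intro t; rw [← Finset.sum_mul, c1' t r]
          rw [Finset.sum_congr rfl fun t (_ : t ∈ Finset.univ) => this t]
          simp [Real.negMulLog, Finset.sum_neg_distrib]
        have lhs_split : ∑ s, ∑ t, m3 (s, t, r) * (Real.log (m3 (s, t, r)) + Real.log (mc r)
            - Real.log (ma (s, r)) - Real.log (mb (t, r)))
            = (∑ s, ∑ t, m3 (s, t, r) * Real.log (m3 (s, t, r)))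
              + (∑ s, ∑ t, m3 (s, t, r) * Real.log (mc r))
              - (∑ s, ∑ t, m3 (s, t, r) * Real.log (ma (s, r)))
              - (∑ s, ∑ t, m3 (s, t, r) * Real.log (mb (t, r))) := by
          simp only [mul_add, mul_sub, Finset.sum_add_distrib, Finset.sum_sub_distrib]
        rw [lhs_split, e1, e2, e3, e4]
        ring
      rw [expand] at hge
      linarith
  -- assemble
  have eq3 : entF p (fun x => (u x, v x, w x))
      = ∑ r, ∑ s, ∑ t, Real.negMulLog (m3 (s, t, r)) := by
    unfold entF
    simp only [Fintype.sum_prod_type]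
    exact sum_rot _
  have eqa : entF p (fun x => (u x, w x)) = ∑ r, ∑ s, Real.negMulLog (ma (s, r)) := by
    unfold entF
    simp only [Fintype.sum_prod_type]
    exact Finset.sum_comm
  have eqb : entF p (fun x => (v x, w x)) = ∑ r, ∑ t, Real.negMulLog (mb (t, r)) := by
    unfold entF
    simp only [Fintype.sum_prod_type]
    exact Finset.sum_comm
  have eqc : entF p w = ∑ r, Real.negMulLog (mc r) := rfl
  rw [eq3, eqa, eqb, eqc, ← Finset.sum_add_distrib, ← Finset.sum_add_distrib]
  exact Finset.sum_le_sum fun r _ => key r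

end Ent

section Bridge
open MeasureTheory

variable {Ω : Type*} [MeasurableSpace Ω] (μ : Measure Ω) [IsProbabilityMeasure μ]

lemma meas_marg {T : Type*} [Fintype T] [MeasurableSpace T] [MeasurableSingletonClass T]
    (W : Ω → T) (hW : Measurable W) {V : Type*} (g : T → V) (v : V) :
    (μ ((fun ω => g (W ω)) ⁻¹' {v})).toReal
      = margF (fun t => (μ (W ⁻¹' {t})).toReal) g v := by
  have hset : (fun ω => g (W ω)) ⁻¹' {v}
      = ⋃ t ∈ (Finset.univ.filter (fun t => g t = v)), W ⁻¹' {t} := by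
    ext ω
    simp [Set.mem_preimage, eq_comm]
  have hdisj : (↑(Finset.univ.filter (fun t : T => g t = v)) : Set T).PairwiseDisjoint
      (fun t => W ⁻¹' {t}) := by
    intro t₁ _ t₂ _ hne
    refine Set.disjoint_left.2 fun ω h₁ h₂ => ?_
    exact hne ((Set.mem_preimage.1 h₁).symm.trans (Set.mem_preimage.1 h₂))
  rw [hset, measure_biUnion_finset hdisj (fun t _ => hW (measurableSet_singleton t)),
    ENNReal.toReal_sum (fun t _ => measure_ne_top μ _)]
  unfold margF
  rw [Finset.sum_filter]

end Bridge

open MeasureTheory in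

lemma finEntropy_eq_entF {Ω T : Type*} [MeasurableSpace Ω] (μ : Measure Ω)
    [IsProbabilityMeasure μ] [Fintype T] [MeasurableSpace T] [MeasurableSingletonClass T]
    (W : Ω → T) (hW : Measurable W) {V : Type*} [Fintype V] (g : T → V) :
    finEntropy μ (fun ω => g (W ω)) = entF (fun t => (μ (W ⁻¹' {t})).toReal) g := by
  unfold finEntropy entF
  exact Finset.sum_congr rfl fun v _ => by rw [meas_marg μ W hW g v]


end Aux

set_option maxHeartbeats 1000000 in
/-- If `A ⊥ (B, X)`, `X ⊥ Y | (A, B)`, and `I(B ; X) ≤ ε`,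
then `I(A ; X | Y) ≤ ε`. -/
theorem stmt13 {Ω SA SB SX SY : Type*} [MeasurableSpace Ω]
    [Fintype SA] [Nonempty SA] [MeasurableSpace SA] [MeasurableSingletonClass SA]
    [Fintype SB] [Nonempty SB] [MeasurableSpace SB] [MeasurableSingletonClass SB]
    [Fintype SX] [Nonempty SX] [MeasurableSpace SX] [MeasurableSingletonClass SX]
    [Fintype SY] [Nonempty SY] [MeasurableSpace SY] [MeasurableSingletonClass SY]
    (μ : Measure Ω) [IsProbabilityMeasure μ]
    (A : Ω → SA) (B : Ω → SB) (X : Ω → SX) (Y : Ω → SY)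
    (hA : Measurable A) (hB : Measurable B) (hX : Measurable X) (hY : Measurable Y)
    (ε : ℝ) (hε : 0 ≤ ε)
    (h1 : IndepFun A (fun ω => (B ω, X ω)) μ)
    (h2 : CondIndepFinRV μ X Y (fun ω => (A ω, B ω)))
    (h3 : finMutualInfo μ B X ≤ ε) :
    finCondMutualInfo μ A X Y ≤ ε := by
  classical
  have hW : Measurable (fun ω => (A ω, B ω, X ω, Y ω)) :=
    hA.prodMk (hB.prodMk (hX.prodMk hY))
  set p : SA × SB × SX × SY → ℝ :=
    fun t => (μ ((fun ω => (A ω, B ω, X ω, Y ω)) ⁻¹' {t})).toReal with hpdef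
  have hp : ∀ t, 0 ≤ p t := fun t => ENNReal.toReal_nonneg
  have hs : ∑ t, p t = 1 := by
    have h := meas_marg μ (fun ω => (A ω, B ω, X ω, Y ω)) hW
      (fun _ => ()) ()
    have e1 : ((fun ω : Ω => (fun _ : SA × SB × SX × SY => ())
        (A ω, B ω, X ω, Y ω)) ⁻¹' {()}) = Set.univ :=
      Set.eq_univ_of_forall fun ω => rfl
    rw [e1, measure_univ, ENNReal.toReal_one] at h
    have e2 : margF p (fun _ : SA × SB × SX × SY => ()) () = ∑ t, p t := by
      unfold margF; simp
    rw [← e2, h]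
  -- independence marginal facts
  have hm1 : ∀ (a : SA) (bx : SB × SX),
      margF p (fun t : SA × SB × SX × SY => (t.1, t.2.1, t.2.2.1)) (a, bx)
        = margF p (fun t : SA × SB × SX × SY => t.1) a
          * margF p (fun t : SA × SB × SX × SY => (t.2.1, t.2.2.1)) bx := by
    intro a bx
    have hmeas := h1.measure_inter_preimage_eq_mul (s := {a}) (t := {bx})
      (measurableSet_singleton a) (measurableSet_singleton bx)
    have hset : A ⁻¹' {a} ∩ (fun ω => (B ω, X ω)) ⁻¹' {bx}
        = (fun ω => (A ω, B ω, X ω)) ⁻¹' {(a, bx)} := by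
      ext ω; simp [Prod.ext_iff]
    rw [hset] at hmeas
    have e0 : (μ ((fun ω => (A ω, B ω, X ω)) ⁻¹' {(a, bx)})).toReal
        = margF p (fun t : SA × SB × SX × SY => (t.1, t.2.1, t.2.2.1)) (a, bx) :=
      meas_marg μ (fun ω => (A ω, B ω, X ω, Y ω)) hW (fun t => (t.1, t.2.1, t.2.2.1)) (a, bx)
    have e1 : (μ (A ⁻¹' {a})).toReal
        = margF p (fun t : SA × SB × SX × SY => t.1) a :=
      meas_marg μ (fun ω => (A ω, B ω, X ω, Y ω)) hW (fun t => t.1) a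
    have e2 : (μ ((fun ω => (B ω, X ω)) ⁻¹' {bx})).toReal
        = margF p (fun t : SA × SB × SX × SY => (t.2.1, t.2.2.1)) bx :=
      meas_marg μ (fun ω => (A ω, B ω, X ω, Y ω)) hW (fun t => (t.2.1, t.2.2.1)) bx
    rw [← e0, ← e1, ← e2, hmeas, ENNReal.toReal_mul]
  have hm1' : ∀ (a : SA) (b : SB),
      margF p (fun t : SA × SB × SX × SY => (t.1, t.2.1)) (a, b)
        = margF p (fun t : SA × SB × SX × SY => t.1) a
          * margF p (fun t : SA × SB × SX × SY => t.2.1) b := by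
    intro a b
    have hmeas := h1.measure_inter_preimage_eq_mul (s := {a}) (t := {b} ×ˢ Set.univ)
      (measurableSet_singleton a) ((measurableSet_singleton b).prod MeasurableSet.univ)
    have hset1 : (fun ω => (B ω, X ω)) ⁻¹' ({b} ×ˢ Set.univ) = B ⁻¹' {b} := by
      ext ω; simp [Set.mem_prod, eq_comm]
    rw [hset1] at hmeas
    have hset2 : A ⁻¹' {a} ∩ B ⁻¹' {b} = (fun ω => (A ω, B ω)) ⁻¹' {(a, b)} := by
      ext ω; simp [Prod.ext_iff]
    rw [hset2] at hmeas
    have e0 : (μ ((fun ω => (A ω, B ω)) ⁻¹' {(a, b)})).toReal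
        = margF p (fun t : SA × SB × SX × SY => (t.1, t.2.1)) (a, b) :=
      meas_marg μ (fun ω => (A ω, B ω, X ω, Y ω)) hW (fun t => (t.1, t.2.1)) (a, b)
    have e1 : (μ (A ⁻¹' {a})).toReal
        = margF p (fun t : SA × SB × SX × SY => t.1) a :=
      meas_marg μ (fun ω => (A ω, B ω, X ω, Y ω)) hW (fun t => t.1) a
    have e2 : (μ (B ⁻¹' {b})).toReal
        = margF p (fun t : SA × SB × SX × SY => t.2.1) b :=
      meas_marg μ (fun ω => (A ω, B ω, X ω, Y ω)) hW (fun t => t.2.1) b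
    rw [← e0, ← e1, ← e2, hmeas, ENNReal.toReal_mul]
  -- conditional independence marginal fact
  have hm2 : ∀ (x : SX) (y : SY) (r : SA × SB),
      margF p (fun t : SA × SB × SX × SY => (t.2.2.1, t.2.2.2, (t.1, t.2.1))) (x, y, r)
          * margF p (fun t : SA × SB × SX × SY => (t.1, t.2.1)) r
        = margF p (fun t : SA × SB × SX × SY => (t.2.2.1, (t.1, t.2.1))) (x, r)
          * margF p (fun t : SA × SB × SX × SY => (t.2.2.2, (t.1, t.2.1))) (y, r) := by
    intro x y r
    have hmeas := h2 x y r
    have s1 : X ⁻¹' {x} ∩ Y ⁻¹' {y} ∩ (fun ω => (A ω, B ω)) ⁻¹' {r}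
        = (fun ω => (X ω, Y ω, (A ω, B ω))) ⁻¹' {(x, y, r)} := by
      ext ω; simp [Prod.ext_iff, and_assoc]
    have s3 : X ⁻¹' {x} ∩ (fun ω => (A ω, B ω)) ⁻¹' {r}
        = (fun ω => (X ω, (A ω, B ω))) ⁻¹' {(x, r)} := by
      ext ω; simp [Prod.ext_iff]
    have s4 : Y ⁻¹' {y} ∩ (fun ω => (A ω, B ω)) ⁻¹' {r}
        = (fun ω => (Y ω, (A ω, B ω))) ⁻¹' {(y, r)} := by
      ext ω; simp [Prod.ext_iff]
    rw [s1, s3, s4] at hmeas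
    have hmeas' := congrArg ENNReal.toReal hmeas
    rw [ENNReal.toReal_mul, ENNReal.toReal_mul] at hmeas'
    have e0 : (μ ((fun ω => (X ω, Y ω, (A ω, B ω))) ⁻¹' {(x, y, r)})).toReal
        = margF p (fun t : SA × SB × SX × SY => (t.2.2.1, t.2.2.2, (t.1, t.2.1))) (x, y, r) :=
      meas_marg μ (fun ω => (A ω, B ω, X ω, Y ω)) hW (fun t => (t.2.2.1, t.2.2.2, (t.1, t.2.1))) (x, y, r)
    have e1 : (μ ((fun ω => (A ω, B ω)) ⁻¹' {r})).toReal
        = margF p (fun t : SA × SB × SX × SY => (t.1, t.2.1)) r :=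
      meas_marg μ (fun ω => (A ω, B ω, X ω, Y ω)) hW (fun t => (t.1, t.2.1)) r
    have e2 : (μ ((fun ω => (X ω, (A ω, B ω))) ⁻¹' {(x, r)})).toReal
        = margF p (fun t : SA × SB × SX × SY => (t.2.2.1, (t.1, t.2.1))) (x, r) :=
      meas_marg μ (fun ω => (A ω, B ω, X ω, Y ω)) hW (fun t => (t.2.2.1, (t.1, t.2.1))) (x, r)
    have e3 : (μ ((fun ω => (Y ω, (A ω, B ω))) ⁻¹' {(y, r)})).toReal
        = margF p (fun t : SA × SB × SX × SY => (t.2.2.2, (t.1, t.2.1))) (y, r) :=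
      meas_marg μ (fun ω => (A ω, B ω, X ω, Y ω)) hW (fun t => (t.2.2.2, (t.1, t.2.1))) (y, r)
    rw [← e0, ← e1, ← e2, ← e3, hmeas']
  -- abstract entropy facts
  have split1 : entF p (fun t : SA × SB × SX × SY => (t.1, t.2.1, t.2.2.1))
      = entF p (fun t : SA × SB × SX × SY => t.1)
        + entF p (fun t : SA × SB × SX × SY => (t.2.1, t.2.2.1)) :=
    entF_pair_of_indep p hs _ _ (fun s r => hm1 s r)
  have split2 : entF p (fun t : SA × SB × SX × SY => (t.1, t.2.1))
      = entF p (fun t : SA × SB × SX × SY => t.1)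
        + entF p (fun t : SA × SB × SX × SY => t.2.1) :=
    entF_pair_of_indep p hs _ _ (fun s r => hm1' s r)
  have cond1 : entF p (fun t : SA × SB × SX × SY => (t.2.2.1, t.2.2.2, (t.1, t.2.1)))
      = entF p (fun t : SA × SB × SX × SY => (t.2.2.1, (t.1, t.2.1)))
        + entF p (fun t : SA × SB × SX × SY => (t.2.2.2, (t.1, t.2.1)))
        - entF p (fun t : SA × SB × SX × SY => (t.1, t.2.1)) :=
    entF_triple_of_condIndep p hp _ _ _ (fun s t r => hm2 s t r)
  have sub1 : entF p (fun t : SA × SB × SX × SY => (t.2.1, t.2.2.1, (t.1, t.2.2.2)))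
      + entF p (fun t : SA × SB × SX × SY => (t.1, t.2.2.2))
      ≤ entF p (fun t : SA × SB × SX × SY => (t.2.1, (t.1, t.2.2.2)))
        + entF p (fun t : SA × SB × SX × SY => (t.2.2.1, (t.1, t.2.2.2))) :=
    entF_submod p hp _ _ _
  have sub2 : entF p (fun t : SA × SB × SX × SY => (t.2.2.1, t.2.2.2, ()))
      + entF p (fun _ : SA × SB × SX × SY => ())
      ≤ entF p (fun t : SA × SB × SX × SY => (t.2.2.1, ()))
        + entF p (fun t : SA × SB × SX × SY => (t.2.2.2, ())) :=
    entF_submod p hp _ _ _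
  have eunit : entF p (fun _ : SA × SB × SX × SY => ()) = 0 := entF_unit p hs
  -- reindexing identifications
  have n1 : entF p (fun t : SA × SB × SX × SY => (t.2.1, t.2.2.1, (t.1, t.2.2.2)))
      = entF p (id : SA × SB × SX × SY → SA × SB × SX × SY) :=
    entF_congr_inj p id (fun z : SA × SB × SX × SY => (z.2.1, z.2.2.1, (z.1, z.2.2.2)))
      (Function.LeftInverse.injective
        (g := fun w : SB × SX × SA × SY => ((w.2.2.1, w.1, w.2.1, w.2.2.2) : SA × SB × SX × SY))
        (fun z => rfl))
  have n2 : entF p (fun t : SA × SB × SX × SY => (t.2.2.1, t.2.2.2, (t.1, t.2.1)))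
      = entF p (id : SA × SB × SX × SY → SA × SB × SX × SY) :=
    entF_congr_inj p id (fun z : SA × SB × SX × SY => (z.2.2.1, z.2.2.2, (z.1, z.2.1)))
      (Function.LeftInverse.injective
        (g := fun w : SX × SY × SA × SB => ((w.2.2.1, w.2.2.2, w.1, w.2.1) : SA × SB × SX × SY))
        (fun z => rfl))
  have n3 : entF p (fun t : SA × SB × SX × SY => (t.2.1, (t.1, t.2.2.2)))
      = entF p (fun t : SA × SB × SX × SY => (t.1, t.2.1, t.2.2.2)) :=
    entF_congr_inj p (fun t : SA × SB × SX × SY => (t.1, t.2.1, t.2.2.2))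
      (fun z : SA × SB × SY => (z.2.1, (z.1, z.2.2)))
      (Function.LeftInverse.injective
        (g := fun w : SB × SA × SY => ((w.2.1, w.1, w.2.2) : SA × SB × SY))
        (fun z => rfl))
  have n4 : entF p (fun t : SA × SB × SX × SY => (t.2.2.1, (t.1, t.2.2.2)))
      = entF p (fun t : SA × SB × SX × SY => (t.1, t.2.2.1, t.2.2.2)) :=
    entF_congr_inj p (fun t : SA × SB × SX × SY => (t.1, t.2.2.1, t.2.2.2))
      (fun z : SA × SX × SY => (z.2.1, (z.1, z.2.2)))
      (Function.LeftInverse.injective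
        (g := fun w : SX × SA × SY => ((w.2.1, w.1, w.2.2) : SA × SX × SY))
        (fun z => rfl))
  have n5 : entF p (fun t : SA × SB × SX × SY => (t.2.2.1, (t.1, t.2.1)))
      = entF p (fun t : SA × SB × SX × SY => (t.1, t.2.1, t.2.2.1)) :=
    entF_congr_inj p (fun t : SA × SB × SX × SY => (t.1, t.2.1, t.2.2.1))
      (fun z : SA × SB × SX => (z.2.2, (z.1, z.2.1)))
      (Function.LeftInverse.injective
        (g := fun w : SX × SA × SB => ((w.2.1, w.2.2, w.1) : SA × SB × SX))
        (fun z => rfl))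
  have n6 : entF p (fun t : SA × SB × SX × SY => (t.2.2.2, (t.1, t.2.1)))
      = entF p (fun t : SA × SB × SX × SY => (t.1, t.2.1, t.2.2.2)) :=
    entF_congr_inj p (fun t : SA × SB × SX × SY => (t.1, t.2.1, t.2.2.2))
      (fun z : SA × SB × SY => (z.2.2, (z.1, z.2.1)))
      (Function.LeftInverse.injective
        (g := fun w : SY × SA × SB => ((w.2.1, w.2.2, w.1) : SA × SB × SY))
        (fun z => rfl))
  have n7 : entF p (fun t : SA × SB × SX × SY => (t.2.2.1, t.2.2.2, ()))
      = entF p (fun t : SA × SB × SX × SY => (t.2.2.1, t.2.2.2)) :=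
    entF_congr_inj p (fun t : SA × SB × SX × SY => (t.2.2.1, t.2.2.2))
      (fun z : SX × SY => (z.1, z.2, ()))
      (Function.LeftInverse.injective
        (g := fun w : SX × SY × Unit => ((w.1, w.2.1) : SX × SY))
        (fun z => rfl))
  have n8 : entF p (fun t : SA × SB × SX × SY => (t.2.2.1, ()))
      = entF p (fun t : SA × SB × SX × SY => t.2.2.1) :=
    entF_congr_inj p (fun t : SA × SB × SX × SY => t.2.2.1)
      (fun z : SX => (z, ()))
      (Function.LeftInverse.injective (g := fun w : SX × Unit => w.1) (fun z => rfl))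
  have n9 : entF p (fun t : SA × SB × SX × SY => (t.2.2.2, ()))
      = entF p (fun t : SA × SB × SX × SY => t.2.2.2) :=
    entF_congr_inj p (fun t : SA × SB × SX × SY => t.2.2.2)
      (fun z : SY => (z, ()))
      (Function.LeftInverse.injective (g := fun w : SY × Unit => w.1) (fun z => rfl))
  -- entropy conversions for goal and h3
  have eh3 : entF p (fun t : SA × SB × SX × SY => t.2.1)
      + entF p (fun t : SA × SB × SX × SY => t.2.2.1)
      - entF p (fun t : SA × SB × SX × SY => (t.2.1, t.2.2.1)) ≤ ε := by
    unfold finMutualInfo at h3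
    rw [show finEntropy μ B = entF p (fun t : SA × SB × SX × SY => t.2.1) from
        finEntropy_eq_entF μ (fun ω => (A ω, B ω, X ω, Y ω)) hW (fun t => t.2.1),
      show finEntropy μ X = entF p (fun t : SA × SB × SX × SY => t.2.2.1) from
        finEntropy_eq_entF μ (fun ω => (A ω, B ω, X ω, Y ω)) hW (fun t => t.2.2.1),
      show finEntropy μ (fun ω => (B ω, X ω))
          = entF p (fun t : SA × SB × SX × SY => (t.2.1, t.2.2.1)) from
        finEntropy_eq_entF μ (fun ω => (A ω, B ω, X ω, Y ω)) hW (fun t => (t.2.1, t.2.2.1))] at h3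
    exact h3
  unfold finCondMutualInfo
  rw [show finEntropy μ (fun ω => (A ω, Y ω))
        = entF p (fun t : SA × SB × SX × SY => (t.1, t.2.2.2)) from
      finEntropy_eq_entF μ (fun ω => (A ω, B ω, X ω, Y ω)) hW (fun t => (t.1, t.2.2.2)),
    show finEntropy μ (fun ω => (X ω, Y ω))
        = entF p (fun t : SA × SB × SX × SY => (t.2.2.1, t.2.2.2)) from
      finEntropy_eq_entF μ (fun ω => (A ω, B ω, X ω, Y ω)) hW (fun t => (t.2.2.1, t.2.2.2)),
    show finEntropy μ (fun ω => (A ω, X ω, Y ω))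
        = entF p (fun t : SA × SB × SX × SY => (t.1, t.2.2.1, t.2.2.2)) from
      finEntropy_eq_entF μ (fun ω => (A ω, B ω, X ω, Y ω)) hW (fun t => (t.1, t.2.2.1, t.2.2.2)),
    show finEntropy μ Y = entF p (fun t : SA × SB × SX × SY => t.2.2.2) from
      finEntropy_eq_entF μ (fun ω => (A ω, B ω, X ω, Y ω)) hW (fun t => t.2.2.2)]
  rw [n1, n3, n4] at sub1
  rw [n7, n8, n9, eunit] at sub2
  rw [n2, n5, n6] at cond1
  linarith [sub1, sub2, cond1, split1, split2, eh3]
end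

section
/- Let G be a nonempty finite additive group and S a nonempty finite type. Let W₁ : Ω → G, W₂₁ : Ω → S, W₂₂ : Ω → G be mutually independent random variables with W₁ uniformly distributed on G, and set C := W₂₂ + W₁. Let Z₁, Z₂₁, Z₂₂ be finitely-valued random variables on Ω such that: (i) Z₁ is conditionally independent of the tuple (W₂₁, W₂₂, Z₂₁, Z₂₂) given W₁; (ii) Z₂₁ is conditionally independent of the tuple (W₁, W₂₂, Z₁, Z₂₂) given W₂₁; and (iii) Z₂₂ is conditionally independent of the tuple (W₁, W₂₁, W₂₂, Z₁, Z₂₁) given C. If ε ≥ 0, I(W₁ ; Z₁) ≤ ε, and I(W₂₁ ; Z₂₁) ≤ ε, then I((W₂₁, W₂₂) ; (Z₁, Z₂₁, Z₂₂)) ≤ 2ε. -/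
open MeasureTheory ProbabilityTheory

set_option linter.unusedSectionVars false
set_option linter.dupNamespace false

namespace Slot2
open Finset
open scoped Classical

variable {V : Type*} [Fintype V]

noncomputable def marg (p : V → ℝ) {A : Type*} [Fintype A] (f : V → A) (a : A) : ℝ :=
  ∑ v, if f v = a then p v else 0

noncomputable def Hp (p : V → ℝ) {A : Type*} [Fintype A] (f : V → A) : ℝ :=
  ∑ a, Real.negMulLog (marg p f a)

variable {p : V → ℝ} {A B C : Type*} [Fintype A] [Fintype B] [Fintype C]

lemma marg_nonneg (hp : ∀ v, 0 ≤ p v) (f : V → A) (a : A) : 0 ≤ marg p f a :=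
  Finset.sum_nonneg fun v _ => by split_ifs <;> simp [hp v]

lemma sum_marg (f : V → A) : ∑ a, marg p f a = ∑ v, p v := by
  simp only [marg]
  rw [Finset.sum_comm]
  exact Finset.sum_congr rfl fun v _ => by simp

lemma marg_comp (θ : A → B) (f : V → A) (b : B) :
    marg p (fun v => θ (f v)) b = ∑ a, if θ a = b then marg p f a else 0 := by
  simp only [marg]
  rw [show (∑ a, if θ a = b then (∑ v, if f v = a then p v else 0) else 0)
      = ∑ a, ∑ v, (if f v = a then (if θ a = b then p v else 0) else 0) from
    Finset.sum_congr rfl fun a _ => by split_ifs with h <;> simp [h]]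
  rw [Finset.sum_comm]
  refine Finset.sum_congr rfl fun v _ => ?_
  rw [Finset.sum_ite_eq Finset.univ (f v) (fun a => if θ a = b then p v else 0)]
  simp


lemma marg_eq_zero_of_not_mem {f : V → A} {a : A} (ha : a ∉ Finset.univ.image f) :
    marg p f a = 0 := by
  rw [marg]
  refine Finset.sum_eq_zero fun v _ => ?_
  rw [if_neg]
  exact fun h => ha (Finset.mem_image.2 ⟨v, Finset.mem_univ v, h⟩)

lemma Hp_congr {f : V → A} {g : V → B} (hfg : ∀ v w, f v = f w ↔ g v = g w) :
    Hp p f = Hp p g := by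
  have key : ∀ v : V, marg p f (f v) = marg p g (g v) := by
    intro v
    exact Finset.sum_congr rfl fun w _ => by
      by_cases h : f w = f v
      · rw [if_pos h, if_pos ((hfg w v).1 h)]
      · rw [if_neg h, if_neg (fun h' => h ((hfg w v).2 h'))]
  have hf : Hp p f = ∑ a ∈ Finset.univ.image f, Real.negMulLog (marg p f a) :=
    (Finset.sum_subset (Finset.subset_univ _)
      (fun a _ ha => by rw [marg_eq_zero_of_not_mem ha, Real.negMulLog_zero])).symm
  have hg : Hp p g = ∑ b ∈ Finset.univ.image g, Real.negMulLog (marg p g b) :=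
    (Finset.sum_subset (Finset.subset_univ _)
      (fun b _ hb => by rw [marg_eq_zero_of_not_mem hb, Real.negMulLog_zero])).symm
  rw [hf, hg]
  refine Finset.sum_bij' (i := fun a ha => g (Finset.mem_image.1 ha).choose)
    (j := fun b hb => f (Finset.mem_image.1 hb).choose) ?_ ?_ ?_ ?_ ?_
  · intro a ha
    exact Finset.mem_image.2 ⟨_, Finset.mem_univ _, rfl⟩
  · intro b hb
    exact Finset.mem_image.2 ⟨_, Finset.mem_univ _, rfl⟩
  · intro a ha
    have h1 := (Finset.mem_image.1 ha).choose_spec.2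
    exact ((hfg _ _).2 (Finset.mem_image.1 (Finset.mem_image.2
      ⟨(Finset.mem_image.1 ha).choose, Finset.mem_univ _, rfl⟩ :
        g (Finset.mem_image.1 ha).choose ∈ Finset.univ.image g)).choose_spec.2).trans h1
  · intro b hb
    have h1 := (Finset.mem_image.1 hb).choose_spec.2
    exact ((hfg _ _).1 (Finset.mem_image.1 (Finset.mem_image.2
      ⟨(Finset.mem_image.1 hb).choose, Finset.mem_univ _, rfl⟩ :
        f (Finset.mem_image.1 hb).choose ∈ Finset.univ.image f)).choose_spec.2).trans h1
  · intro a ha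
    have h1 := (Finset.mem_image.1 ha).choose_spec.2
    have h2 : marg p f a = marg p f (f (Finset.mem_image.1 ha).choose) := by rw [h1]
    rw [h2, key]

lemma marg_fst (f : V → A) (g : V → B) (a : A) :
    marg p f a = ∑ b, marg p (fun v => (f v, g v)) (a, b) := by
  simp only [marg]
  rw [Finset.sum_comm]
  refine Finset.sum_congr rfl fun v _ => ?_
  by_cases h1 : f v = a <;> simp [Prod.ext_iff, h1]

lemma marg_snd (f : V → A) (g : V → B) (b : B) :
    marg p g b = ∑ a, marg p (fun v => (f v, g v)) (a, b) := by
  simp only [marg]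
  rw [Finset.sum_comm]
  refine Finset.sum_congr rfl fun v _ => ?_
  by_cases h1 : g v = b <;> simp [Prod.ext_iff, h1]

lemma marg_mid (f : V → A) (g : V → B) (h : V → C) (a : A) (c : C) :
    marg p (fun v => (f v, h v)) (a, c)
      = ∑ b, marg p (fun v => (f v, g v, h v)) (a, b, c) := by
  simp only [marg]
  rw [Finset.sum_comm]
  refine Finset.sum_congr rfl fun v _ => ?_
  by_cases h1 : f v = a <;> by_cases h2 : h v = c <;> simp [Prod.ext_iff, h1, h2]

noncomputable def MIp (p : V → ℝ) {A B : Type*} [Fintype A] [Fintype B]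
    (f : V → A) (g : V → B) : ℝ :=
  Hp p f + Hp p g - Hp p (fun v => (f v, g v))

noncomputable def CIp (p : V → ℝ) {A B C : Type*} [Fintype A] [Fintype B] [Fintype C]
    (f : V → A) (g : V → B) (h : V → C) : ℝ :=
  Hp p (fun v => (f v, h v)) + Hp p (fun v => (g v, h v))
    - Hp p (fun v => (f v, g v, h v)) - Hp p h

lemma chainRule (f : V → A) (g : V → B) (h : V → C) :
    MIp p f (fun v => (g v, h v)) = MIp p f h + CIp p f g h := by
  simp only [MIp, CIp]
  ring

lemma sum3_cab {α β γ : Type*} [Fintype α] [Fintype β] [Fintype γ] (F : α → β → γ → ℝ) :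
    ∑ a, ∑ b, ∑ c, F a b c = ∑ c, ∑ a, ∑ b, F a b c := by
  have h1 : ∀ a, ∑ b, ∑ c, F a b c = ∑ c, ∑ b, F a b c := fun a => Finset.sum_comm
  simp only [h1]
  exact Finset.sum_comm

lemma sum3_bca {α β γ : Type*} [Fintype α] [Fintype β] [Fintype γ] (F : α → β → γ → ℝ) :
    ∑ a, ∑ b, ∑ c, F a b c = ∑ b, ∑ c, ∑ a, F a b c := by
  rw [Finset.sum_comm]
  exact Finset.sum_congr rfl fun b _ => Finset.sum_comm

lemma marg_h_triple (f : V → A) (g : V → B) (h : V → C) (c : C) :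
    marg p h c = ∑ a, ∑ b, marg p (fun v => (f v, g v, h v)) (a, b, c) := by
  simp only [marg]
  rw [sum3_cab]
  refine Finset.sum_congr rfl fun v _ => ?_
  by_cases h1 : h v = c <;> simp [Prod.ext_iff, h1, ite_and]

lemma CIp_eq_sum (f : V → A) (g : V → B) (h : V → C) :
    CIp p f g h = ∑ a, ∑ b, ∑ c,
      marg p (fun v => (f v, g v, h v)) (a, b, c) *
        (Real.log (marg p (fun v => (f v, g v, h v)) (a, b, c))
          + Real.log (marg p h c)
          - Real.log (marg p (fun v => (f v, h v)) (a, c))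
          - Real.log (marg p (fun v => (g v, h v)) (b, c))) := by
  have S1 : ∑ a, ∑ b, ∑ c, marg p (fun v => (f v, g v, h v)) (a, b, c) *
      Real.log (marg p (fun v => (f v, g v, h v)) (a, b, c))
      = -Hp p (fun v => (f v, g v, h v)) := by
    simp only [Hp, Fintype.sum_prod_type, Real.negMulLog_eq_neg,
      Finset.sum_neg_distrib, neg_neg]
  have S2 : ∑ a, ∑ b, ∑ c, marg p (fun v => (f v, g v, h v)) (a, b, c) *
      Real.log (marg p h c) = -Hp p h := by
    simp only [Hp, Real.negMulLog_eq_neg, Finset.sum_neg_distrib, neg_neg]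
    rw [sum3_cab]
    refine Finset.sum_congr rfl fun c _ => ?_
    simp only [← Finset.sum_mul]
    rw [← marg_h_triple f g h c]
  have S3 : ∑ a, ∑ b, ∑ c, marg p (fun v => (f v, g v, h v)) (a, b, c) *
      Real.log (marg p (fun v => (f v, h v)) (a, c))
      = -Hp p (fun v => (f v, h v)) := by
    simp only [Hp, Fintype.sum_prod_type, Real.negMulLog_eq_neg,
      Finset.sum_neg_distrib, neg_neg]
    refine Finset.sum_congr rfl fun a _ => ?_
    rw [Finset.sum_comm]
    refine Finset.sum_congr rfl fun c _ => ?_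
    rw [← Finset.sum_mul, ← marg_mid f g h a c]
  have S4 : ∑ a, ∑ b, ∑ c, marg p (fun v => (f v, g v, h v)) (a, b, c) *
      Real.log (marg p (fun v => (g v, h v)) (b, c))
      = -Hp p (fun v => (g v, h v)) := by
    simp only [Hp, Fintype.sum_prod_type, Real.negMulLog_eq_neg,
      Finset.sum_neg_distrib, neg_neg]
    rw [Finset.sum_comm]
    refine Finset.sum_congr rfl fun b _ => ?_
    rw [Finset.sum_comm]
    refine Finset.sum_congr rfl fun c _ => ?_
    rw [← Finset.sum_mul, ← marg_snd f (fun v => (g v, h v)) (b, c)]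
  simp only [mul_add, mul_sub, Finset.sum_add_distrib, Finset.sum_sub_distrib]
  rw [S1, S2, S3, S4, CIp]
  ring

lemma real_gibbs {P A B Cc : ℝ} (hP : 0 ≤ P) (hPA : P ≤ A) (hPB : P ≤ B) (hACc : A ≤ Cc) :
    P - A * B / Cc ≤ P * (Real.log P + Real.log Cc - Real.log A - Real.log B) := by
  rcases eq_or_lt_of_le hP with h0 | h0
  · rw [← h0]
    have hA : (0:ℝ) ≤ A := by linarith
    have hB : (0:ℝ) ≤ B := by linarith
    have hCc : (0:ℝ) ≤ Cc := by linarith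
    simp only [zero_mul, zero_sub, neg_nonpos]  -- goal 0 - A*B/Cc ≤ 0
    positivity
  · have hA' : 0 < A := lt_of_lt_of_le h0 hPA
    have hB' : 0 < B := lt_of_lt_of_le h0 hPB
    have hC' : 0 < Cc := lt_of_lt_of_le hA' hACc
    have hx : 0 < A * B / (P * Cc) := by positivity
    have hlog := Real.log_le_sub_one_of_pos hx
    have e3 : Real.log (A * B / (P * Cc))
        = Real.log A + Real.log B - Real.log P - Real.log Cc := by
      rw [Real.log_div (by positivity) (by positivity),
        Real.log_mul (ne_of_gt hA') (ne_of_gt hB'),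
        Real.log_mul (ne_of_gt h0) (ne_of_gt hC')]
      ring
    have e2 : P * (A * B / (P * Cc)) = A * B / Cc := by
      field_simp
    have e4 := mul_le_mul_of_nonneg_left hlog hP
    rw [e3] at e4
    nlinarith [e4, e2]

lemma CIp_nonneg (hp : ∀ v, 0 ≤ p v) (hs : ∑ v, p v = 1)
    (f : V → A) (g : V → B) (h : V → C) : 0 ≤ CIp p f g h := by
  rw [CIp_eq_sum]
  have hPnn : ∀ x, 0 ≤ marg p (fun v => (f v, g v, h v)) x := marg_nonneg hp _
  have key : ∀ a b c,
      marg p (fun v => (f v, g v, h v)) (a, b, c)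
        - marg p (fun v => (f v, h v)) (a, c) * marg p (fun v => (g v, h v)) (b, c)
            / marg p h c
      ≤ marg p (fun v => (f v, g v, h v)) (a, b, c) *
        (Real.log (marg p (fun v => (f v, g v, h v)) (a, b, c))
          + Real.log (marg p h c)
          - Real.log (marg p (fun v => (f v, h v)) (a, c))
          - Real.log (marg p (fun v => (g v, h v)) (b, c))) := by
    intro a b c
    refine real_gibbs (hPnn _) ?_ ?_ ?_
    · rw [marg_mid f g h a c]
      exact Finset.single_le_sum
        (f := fun b => marg p (fun v => (f v, g v, h v)) (a, b, c))
        (fun b _ => hPnn _) (Finset.mem_univ b)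
    · rw [marg_snd f (fun v => (g v, h v)) (b, c)]
      exact Finset.single_le_sum
        (f := fun a => marg p (fun v => (f v, g v, h v)) (a, b, c))
        (fun a _ => hPnn _) (Finset.mem_univ a)
    · rw [marg_h_triple f g h c, marg_mid f g h a c]
      exact Finset.single_le_sum
        (f := fun a => ∑ b, marg p (fun v => (f v, g v, h v)) (a, b, c))
        (fun a _ => Finset.sum_nonneg fun b _ => hPnn _) (Finset.mem_univ a)
  have step1 : ∑ a, ∑ b, ∑ c,
      (marg p (fun v => (f v, g v, h v)) (a, b, c)
        - marg p (fun v => (f v, h v)) (a, c) * marg p (fun v => (g v, h v)) (b, c)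
            / marg p h c)
      ≤ ∑ a, ∑ b, ∑ c, marg p (fun v => (f v, g v, h v)) (a, b, c) *
        (Real.log (marg p (fun v => (f v, g v, h v)) (a, b, c))
          + Real.log (marg p h c)
          - Real.log (marg p (fun v => (f v, h v)) (a, c))
          - Real.log (marg p (fun v => (g v, h v)) (b, c))) :=
    Finset.sum_le_sum fun a _ => Finset.sum_le_sum fun b _ =>
      Finset.sum_le_sum fun c _ => key a b c
  refine le_trans ?_ step1
  have sumP : ∑ a, ∑ b, ∑ c, marg p (fun v => (f v, g v, h v)) (a, b, c) = 1 := by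
    have h1 : ∑ x : A × B × C, marg p (fun v => (f v, g v, h v)) x = 1 := by
      rw [sum_marg, hs]
    rw [Fintype.sum_prod_type] at h1
    simp only [Fintype.sum_prod_type] at h1
    exact h1
  have sumD : ∑ a, ∑ b, ∑ c, marg p (fun v => (f v, h v)) (a, c) *
      marg p (fun v => (g v, h v)) (b, c) / marg p h c ≤ 1 := by
    rw [sum3_cab]
    have perc : ∀ c, ∑ a, ∑ b, marg p (fun v => (f v, h v)) (a, c) *
        marg p (fun v => (g v, h v)) (b, c) / marg p h c ≤ marg p h c := by
      intro c
      have e1 : ∑ a, ∑ b, marg p (fun v => (f v, h v)) (a, c) *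
          marg p (fun v => (g v, h v)) (b, c) / marg p h c
          = (∑ a, marg p (fun v => (f v, h v)) (a, c)) *
            ((∑ b, marg p (fun v => (g v, h v)) (b, c)) / marg p h c) := by
        rw [Finset.sum_mul]
        refine Finset.sum_congr rfl fun a _ => ?_
        rw [← Finset.sum_div, ← Finset.mul_sum, mul_div_assoc]
      rw [e1, ← marg_snd f h c, ← marg_snd g h c]
      rcases eq_or_ne (marg p h c) 0 with h0 | h0
      · rw [h0]
        simp
      · rw [div_self h0, mul_one]
    calc ∑ c, ∑ a, ∑ b, marg p (fun v => (f v, h v)) (a, c) *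
          marg p (fun v => (g v, h v)) (b, c) / marg p h c
        ≤ ∑ c, marg p h c := Finset.sum_le_sum fun c _ => perc c
      _ = 1 := by rw [sum_marg, hs]
  simp only [Finset.sum_sub_distrib, sumP]
  linarith [sumD]


lemma CIp_eq_zero (hp : ∀ v, 0 ≤ p v) {f : V → A} {g : V → B} {h : V → C}
    (hci : ∀ a b c, marg p (fun v => (f v, g v, h v)) (a, b, c) * marg p h c
      = marg p (fun v => (f v, h v)) (a, c) * marg p (fun v => (g v, h v)) (b, c)) :
    CIp p f g h = 0 := by
  rw [CIp_eq_sum]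
  have hPnn : ∀ x, 0 ≤ marg p (fun v => (f v, g v, h v)) x := marg_nonneg hp _
  refine Finset.sum_eq_zero fun a _ => Finset.sum_eq_zero fun b _ =>
    Finset.sum_eq_zero fun c _ => ?_
  rcases eq_or_lt_of_le (hPnn (a, b, c)) with h0 | h0
  · rw [← h0, zero_mul]
  · have hPA : marg p (fun v => (f v, g v, h v)) (a, b, c)
        ≤ marg p (fun v => (f v, h v)) (a, c) := by
      rw [marg_mid f g h a c]
      exact Finset.single_le_sum
        (f := fun b => marg p (fun v => (f v, g v, h v)) (a, b, c))
        (fun b _ => hPnn _) (Finset.mem_univ b)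
    have hPB : marg p (fun v => (f v, g v, h v)) (a, b, c)
        ≤ marg p (fun v => (g v, h v)) (b, c) := by
      rw [marg_snd f (fun v => (g v, h v)) (b, c)]
      exact Finset.single_le_sum
        (f := fun a => marg p (fun v => (f v, g v, h v)) (a, b, c))
        (fun a _ => hPnn _) (Finset.mem_univ a)
    have hAC : marg p (fun v => (f v, h v)) (a, c) ≤ marg p h c := by
      rw [marg_h_triple f g h c, marg_mid f g h a c]
      exact Finset.single_le_sum
        (f := fun a => ∑ b, marg p (fun v => (f v, g v, h v)) (a, b, c))
        (fun a _ => Finset.sum_nonneg fun b _ => hPnn _) (Finset.mem_univ a)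
    have hA : 0 < marg p (fun v => (f v, h v)) (a, c) := lt_of_lt_of_le h0 hPA
    have hB : 0 < marg p (fun v => (g v, h v)) (b, c) := lt_of_lt_of_le h0 hPB
    have hC : 0 < marg p h c := lt_of_lt_of_le hA hAC
    have e1 : Real.log (marg p (fun v => (f v, g v, h v)) (a, b, c))
        + Real.log (marg p h c)
        = Real.log (marg p (fun v => (f v, h v)) (a, c))
          + Real.log (marg p (fun v => (g v, h v)) (b, c)) := by
      rw [← Real.log_mul (ne_of_gt h0) (ne_of_gt hC),
        ← Real.log_mul (ne_of_gt hA) (ne_of_gt hB), hci]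
    have e2 : Real.log (marg p (fun v => (f v, g v, h v)) (a, b, c))
        + Real.log (marg p h c)
        - Real.log (marg p (fun v => (f v, h v)) (a, c))
        - Real.log (marg p (fun v => (g v, h v)) (b, c)) = 0 := by linarith
    rw [e2, mul_zero]

lemma Hp_unit (hs : ∑ v, p v = 1) : Hp p (fun _ : V => (() : Unit)) = 0 := by
  rw [Hp]
  have : marg p (fun _ : V => (() : Unit)) () = 1 := by
    rw [marg]
    simp [hs]
  simp [this]

lemma Hp_pair_unit (f : V → A) :
    Hp p (fun v => (f v, (() : Unit))) = Hp p f :=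
  Hp_congr (by intro v w; simp [Prod.ext_iff])

lemma MIp_eq_CIp_unit (hs : ∑ v, p v = 1) (f : V → A) (g : V → B) :
    MIp p f g = CIp p f g (fun _ => (() : Unit)) := by
  rw [MIp, CIp, Hp_pair_unit f, Hp_pair_unit g, Hp_unit hs,
    show Hp p (fun v => (f v, g v, (() : Unit))) = Hp p (fun v => (f v, g v)) from
      Hp_congr (by intro v w; simp [Prod.ext_iff])]
  ring

lemma MIp_nonneg (hp : ∀ v, 0 ≤ p v) (hs : ∑ v, p v = 1) (f : V → A) (g : V → B) :
    0 ≤ MIp p f g := by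
  rw [MIp_eq_CIp_unit hs]
  exact CIp_nonneg hp hs f g _

lemma MIp_symm (f : V → A) (g : V → B) : MIp p f g = MIp p g f := by
  rw [MIp, MIp, show Hp p (fun v => (f v, g v)) = Hp p (fun v => (g v, f v)) from
    Hp_congr (by intro v w; simp [Prod.ext_iff, and_comm])]
  ring

lemma CIp_symm (f : V → A) (g : V → B) (h : V → C) : CIp p f g h = CIp p g f h := by
  rw [CIp, CIp, show Hp p (fun v => (f v, g v, h v)) = Hp p (fun v => (g v, f v, h v)) from
    Hp_congr (by intro v w; simp [Prod.ext_iff]; tauto)]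
  ring

lemma MIp_congr_right {B' : Type*} [Fintype B'] (f : V → A) {g : V → B} {g' : V → B'}
    (hg : ∀ v w, g v = g w ↔ g' v = g' w) : MIp p f g = MIp p f g' := by
  rw [MIp, MIp, Hp_congr hg,
    show Hp p (fun v => (f v, g v)) = Hp p (fun v => (f v, g' v)) from
      Hp_congr (by intro v w; simp [Prod.ext_iff, hg v w])]

lemma MIp_indep (hs : ∑ v, p v = 1) {f : V → A} {g : V → B}
    (hind : ∀ a b, marg p (fun v => (f v, g v)) (a, b) = marg p f a * marg p g b) :
    MIp p f g = 0 := by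
  have key : Hp p (fun v => (f v, g v)) = Hp p f + Hp p g := by
    rw [Hp, Fintype.sum_prod_type]
    simp only [hind, Real.negMulLog_mul]
    rw [show (∑ a, ∑ b, (marg p g b * Real.negMulLog (marg p f a)
          + marg p f a * Real.negMulLog (marg p g b)))
        = (∑ a, (∑ b, marg p g b) * Real.negMulLog (marg p f a))
          + ∑ a, marg p f a * ∑ b, Real.negMulLog (marg p g b) from by
      rw [← Finset.sum_add_distrib]
      refine Finset.sum_congr rfl fun a _ => ?_
      rw [Finset.sum_add_distrib, ← Finset.sum_mul, ← Finset.mul_sum]]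
    rw [sum_marg, hs, ← Finset.sum_mul, sum_marg, hs]
    simp [Hp]
  rw [MIp, key]
  ring

lemma marg_unit_left (F : V → A) (z : A) :
    marg p (fun v => ((() : Unit), F v)) ((), z) = marg p F z := by
  simp only [marg]
  exact Finset.sum_congr rfl fun v _ => by simp [Prod.ext_iff]

lemma marg_fiber {D B C E : Type*} [Fintype D] [Fintype B] [Fintype C] [Fintype E]
    (u : V → D) (y : V → B) (h : V → C) (w : B → C → E) (σE : E → C)
    (hσ : ∀ v, σE (w (y v) (h v)) = h v) (d : D) (e : E) :
    marg p (fun v => (u v, w (y v) (h v))) (d, e)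
      = ∑ b ∈ Finset.univ.filter (fun b => w b (σE e) = e),
          marg p (fun v => (u v, y v, h v)) (d, b, σE e) := by
  simp only [marg]
  rw [Finset.sum_comm]
  refine Finset.sum_congr rfl fun v _ => ?_
  by_cases hv : u v = d ∧ w (y v) (h v) = e
  · have hhv : h v = σE e := by rw [← hσ v, hv.2]
    rw [if_pos (by simp [Prod.ext_iff, hv.1, hv.2])]
    rw [Finset.sum_eq_single_of_mem (y v)
      (Finset.mem_filter.2 ⟨Finset.mem_univ _, by rw [← hhv, hv.2]⟩)]
    · rw [if_pos (by simp [Prod.ext_iff, hv.1, hhv])]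
    · intro b _ hne
      rw [if_neg]
      simp only [Prod.ext_iff, not_and]
      intro _ hyb
      exact absurd hyb.symm hne
  · rw [if_neg (by simp only [Prod.ext_iff]; tauto)]
    refine (Finset.sum_eq_zero fun b hb => ?_).symm
    rw [if_neg]
    simp only [Prod.ext_iff, not_and]
    intro hud hyb hhv
    apply hv
    refine ⟨hud, ?_⟩
    rw [hyb, hhv]
    exact (Finset.mem_filter.1 hb).2

lemma CI_master {B' C' : Type*} [Fintype B'] [Fintype C']
    (hp : ∀ v, 0 ≤ p v)
    {x : V → A} {y : V → B} {h : V → C}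
    (hci : ∀ a b c, marg p (fun v => (x v, y v, h v)) (a, b, c) * marg p h c
      = marg p (fun v => (x v, h v)) (a, c) * marg p (fun v => (y v, h v)) (b, c))
    (φ : B → C → B') (ψ : B → C → C') (σ : C' → C)
    (hσ : ∀ v, σ (ψ (y v) (h v)) = h v) :
    ∀ (a : A) (b' : B') (c' : C'),
      marg p (fun v => (x v, φ (y v) (h v), ψ (y v) (h v))) (a, b', c')
          * marg p (fun v => ψ (y v) (h v)) c'
        = marg p (fun v => (x v, ψ (y v) (h v))) (a, c')
          * marg p (fun v => (φ (y v) (h v), ψ (y v) (h v))) (b', c') := by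
  intro a b' c'
  have N1 : marg p (fun v => (x v, φ (y v) (h v), ψ (y v) (h v))) (a, b', c')
      = ∑ b ∈ Finset.univ.filter (fun b => φ b (σ c') = b' ∧ ψ b (σ c') = c'),
          marg p (fun v => (x v, y v, h v)) (a, b, σ c') := by
    have := marg_fiber (p := p) x y h (fun b c => (φ b c, ψ b c))
      (fun z : B' × C' => σ z.2) (fun v => hσ v) a (b', c')
    simpa using this
  have N2 : marg p (fun v => ψ (y v) (h v)) c'
      = ∑ b ∈ Finset.univ.filter (fun b => ψ b (σ c') = c'),
          marg p (fun v => (y v, h v)) (b, σ c') := by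
    have := marg_fiber (p := p) (fun _ => (() : Unit)) y h ψ σ hσ () c'
    simpa [marg_unit_left] using this
  have N3 : marg p (fun v => (x v, ψ (y v) (h v))) (a, c')
      = ∑ b ∈ Finset.univ.filter (fun b => ψ b (σ c') = c'),
          marg p (fun v => (x v, y v, h v)) (a, b, σ c') := by
    have := marg_fiber (p := p) x y h ψ σ hσ a c'
    simpa using this
  have N4 : marg p (fun v => (φ (y v) (h v), ψ (y v) (h v))) (b', c')
      = ∑ b ∈ Finset.univ.filter (fun b => φ b (σ c') = b' ∧ ψ b (σ c') = c'),
          marg p (fun v => (y v, h v)) (b, σ c') := by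
    have := marg_fiber (p := p) (fun _ => (() : Unit)) y h (fun b c => (φ b c, ψ b c))
      (fun z : B' × C' => σ z.2) (fun v => hσ v) () (b', c')
    simpa [marg_unit_left] using this
  rw [N1, N2, N3, N4]
  have key : ∀ s : Finset B,
      (∑ b ∈ s, marg p (fun v => (x v, y v, h v)) (a, b, σ c')) * marg p h (σ c')
        = marg p (fun v => (x v, h v)) (a, σ c')
          * ∑ b ∈ s, marg p (fun v => (y v, h v)) (b, σ c') := by
    intro s
    rw [Finset.sum_mul, Finset.mul_sum]
    exact Finset.sum_congr rfl fun b _ => hci a b (σ c')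
  rcases eq_or_ne (marg p h (σ c')) 0 with h0 | h0
  · have hNz : ∀ b, marg p (fun v => (y v, h v)) (b, σ c') = 0 := by
      intro b
      have hle : marg p (fun v => (y v, h v)) (b, σ c') ≤ marg p h (σ c') := by
        rw [marg_snd y h (σ c')]
        exact Finset.single_le_sum (f := fun b => marg p (fun v => (y v, h v)) (b, σ c'))
          (fun b _ => marg_nonneg hp _ _) (Finset.mem_univ b)
      have := marg_nonneg hp (fun v => (y v, h v)) (b, σ c')
      rw [h0] at hle
      linarith
    have hMz : ∀ b, marg p (fun v => (x v, y v, h v)) (a, b, σ c') = 0 := by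
      intro b
      have hle : marg p (fun v => (x v, y v, h v)) (a, b, σ c')
          ≤ marg p (fun v => (y v, h v)) (b, σ c') := by
        rw [marg_snd x (fun v => (y v, h v)) (b, σ c')]
        exact Finset.single_le_sum
          (f := fun a => marg p (fun v => (x v, y v, h v)) (a, b, σ c'))
          (fun a _ => marg_nonneg hp _ _) (Finset.mem_univ a)
      have := marg_nonneg hp (fun v => (x v, y v, h v)) (a, b, σ c')
      rw [hNz b] at hle
      linarith
    rw [Finset.sum_congr rfl fun b _ => hMz b, Finset.sum_congr rfl fun b _ => hMz b]
    simp
  · refine mul_right_cancel₀ h0 ?_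
    linear_combination
      (∑ b ∈ Finset.univ.filter (fun b => ψ b (σ c') = c'),
          marg p (fun v => (y v, h v)) (b, σ c'))
        * key (Finset.univ.filter (fun b => φ b (σ c') = b' ∧ ψ b (σ c') = c'))
      - (∑ b ∈ Finset.univ.filter (fun b => φ b (σ c') = b' ∧ ψ b (σ c') = c'),
          marg p (fun v => (y v, h v)) (b, σ c'))
        * key (Finset.univ.filter (fun b => ψ b (σ c') = c'))

section Bridge

open Finset

variable {Ω : Type*} [MeasurableSpace Ω] (μ : Measure Ω) [IsProbabilityMeasure μ]
variable {V : Type*} [Fintype V] [MeasurableSpace V] [MeasurableSingletonClass V]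
variable (T : Ω → V)

/-- The joint distribution of the master tuple, as a function on `V`. -/
noncomputable def pdist : V → ℝ := fun v => (μ (T ⁻¹' {v})).toReal

lemma pdist_nonneg : ∀ v, 0 ≤ pdist μ T v := fun _ => ENNReal.toReal_nonneg

variable {A B C : Type*} [Fintype A] [Fintype B] [Fintype C]

lemma measure_preimage_comp (hT : Measurable T) (F : V → A) (a : A) :
    μ ((fun ω => F (T ω)) ⁻¹' {a})
      = ∑ v ∈ Finset.univ.filter (fun v => F v = a), μ (T ⁻¹' {v}) := by
  have hset : (fun ω => F (T ω)) ⁻¹' {a}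
      = T ⁻¹' (↑(Finset.univ.filter (fun v => F v = a)) : Set V) := by
    ext ω
    simp
  rw [hset, ← MeasureTheory.sum_measure_preimage_singleton _
    (fun v _ => hT (measurableSet_singleton v))]

lemma marg_eq (hT : Measurable T) (F : V → A) (a : A) :
    marg (pdist μ T) F a = (μ ((fun ω => F (T ω)) ⁻¹' {a})).toReal := by
  rw [measure_preimage_comp μ T hT F a,
    ENNReal.toReal_sum (fun v _ => measure_ne_top μ _), marg, ← Finset.sum_filter]
  rfl

lemma sum_pdist (hT : Measurable T) : ∑ v, pdist μ T v = 1 := by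
  simp only [pdist]
  rw [← ENNReal.toReal_sum (fun v _ => measure_ne_top μ _),
    MeasureTheory.sum_measure_preimage_singleton _
      (fun v _ => hT (measurableSet_singleton v))]
  simp

lemma finEntropy_eq (hT : Measurable T) (F : V → A) :
    finEntropy μ (fun ω => F (T ω)) = Hp (pdist μ T) F := by
  rw [finEntropy, Hp]
  exact Finset.sum_congr rfl fun a _ => by rw [marg_eq μ T hT F a]

lemma finMutualInfo_eq (hT : Measurable T) (F : V → A) (G : V → B) :
    finMutualInfo μ (fun ω => F (T ω)) (fun ω => G (T ω)) = MIp (pdist μ T) F G := by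
  rw [finMutualInfo, MIp]
  congr 1
  congr 1
  · exact finEntropy_eq μ T hT F
  · exact finEntropy_eq μ T hT G
  · exact finEntropy_eq μ T hT (fun v => (F v, G v))

lemma condIndep_marg (hT : Measurable T) (F : V → A) (G : V → B) (H : V → C)
    (hci : CondIndepFinRV μ (fun ω => F (T ω)) (fun ω => G (T ω)) (fun ω => H (T ω))) :
    ∀ a b c, marg (pdist μ T) (fun v => (F v, G v, H v)) (a, b, c)
        * marg (pdist μ T) H c
      = marg (pdist μ T) (fun v => (F v, H v)) (a, c)
        * marg (pdist μ T) (fun v => (G v, H v)) (b, c) := by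
  intro a b c
  have h := hci a b c
  have e1 : (fun ω => F (T ω)) ⁻¹' {a} ∩ (fun ω => G (T ω)) ⁻¹' {b}
        ∩ (fun ω => H (T ω)) ⁻¹' {c}
      = (fun ω => (F (T ω), G (T ω), H (T ω))) ⁻¹' {(a, b, c)} := by
    ext ω
    simp [Prod.ext_iff, and_assoc]
  have e2 : (fun ω => F (T ω)) ⁻¹' {a} ∩ (fun ω => H (T ω)) ⁻¹' {c}
      = (fun ω => (F (T ω), H (T ω))) ⁻¹' {(a, c)} := by
    ext ω
    simp [Prod.ext_iff]
  have e3 : (fun ω => G (T ω)) ⁻¹' {b} ∩ (fun ω => H (T ω)) ⁻¹' {c}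
      = (fun ω => (G (T ω), H (T ω))) ⁻¹' {(b, c)} := by
    ext ω
    simp [Prod.ext_iff]
  rw [e1, e2, e3] at h
  have h2 := congrArg ENNReal.toReal h
  rw [ENNReal.toReal_mul, ENNReal.toReal_mul] at h2
  rw [marg_eq μ T hT (fun v => (F v, G v, H v)) (a, b, c), marg_eq μ T hT H c,
    marg_eq μ T hT (fun v => (F v, H v)) (a, c),
    marg_eq μ T hT (fun v => (G v, H v)) (b, c)]
  exact h2

end Bridge

end Slot2

open Slot2 Finset in
/-- Slot-2 leakage bound: with `W₁, W₂₁, W₂₂` mutually independent, `W₁`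
uniform on `G`, cipher `C = W₂₂ + W₁`, and eavesdropper outputs `Z₁, Z₂₁, Z₂₂`
depending on the transmissions as stated, wiretap leakage bounds
`I(W₁ ; Z₁) ≤ ε` and `I(W₂₁ ; Z₂₁) ≤ ε` give
`I((W₂₁, W₂₂) ; (Z₁, Z₂₁, Z₂₂)) ≤ 2ε`. -/
theorem stmt15 {Ω G S T₁ T₂ T₃ : Type*} [MeasurableSpace Ω]
    [AddGroup G] [Fintype G] [Nonempty G]
    [MeasurableSpace G] [MeasurableSingletonClass G]
    [Fintype S] [Nonempty S] [MeasurableSpace S] [MeasurableSingletonClass S]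
    [Fintype T₁] [Nonempty T₁] [MeasurableSpace T₁] [MeasurableSingletonClass T₁]
    [Fintype T₂] [Nonempty T₂] [MeasurableSpace T₂] [MeasurableSingletonClass T₂]
    [Fintype T₃] [Nonempty T₃] [MeasurableSpace T₃] [MeasurableSingletonClass T₃]
    (μ : Measure Ω) [IsProbabilityMeasure μ]
    (W₁ : Ω → G) (W₂₁ : Ω → S) (W₂₂ : Ω → G)
    (Z₁ : Ω → T₁) (Z₂₁ : Ω → T₂) (Z₂₂ : Ω → T₃)
    (hW₁ : Measurable W₁) (hW₂₁ : Measurable W₂₁) (hW₂₂ : Measurable W₂₂)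
    (hZ₁ : Measurable Z₁) (hZ₂₁ : Measurable Z₂₁) (hZ₂₂ : Measurable Z₂₂)
    (hunif : IsUniformRV μ W₁)
    (hmutind : ∀ (g : G) (s : S) (g' : G),
      μ (W₁ ⁻¹' {g} ∩ W₂₁ ⁻¹' {s} ∩ W₂₂ ⁻¹' {g'}) =
        μ (W₁ ⁻¹' {g}) * μ (W₂₁ ⁻¹' {s}) * μ (W₂₂ ⁻¹' {g'}))
    (hch1 : CondIndepFinRV μ Z₁
      (fun ω => (W₂₁ ω, W₂₂ ω, Z₂₁ ω, Z₂₂ ω)) W₁)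
    (hch2 : CondIndepFinRV μ Z₂₁
      (fun ω => (W₁ ω, W₂₂ ω, Z₁ ω, Z₂₂ ω)) W₂₁)
    (hch3 : CondIndepFinRV μ Z₂₂
      (fun ω => (W₁ ω, W₂₁ ω, W₂₂ ω, Z₁ ω, Z₂₁ ω))
      (fun ω => W₂₂ ω + W₁ ω))
    (ε : ℝ) (hε : 0 ≤ ε)
    (hleak1 : finMutualInfo μ W₁ Z₁ ≤ ε)
    (hleak2 : finMutualInfo μ W₂₁ Z₂₁ ≤ ε) :
    finMutualInfo μ (fun ω => (W₂₁ ω, W₂₂ ω))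
      (fun ω => (Z₁ ω, Z₂₁ ω, Z₂₂ ω)) ≤ 2 * ε := by
  classical
  set T : Ω → G × S × G × T₁ × T₂ × T₃ :=
    (fun ω => (W₁ ω, W₂₁ ω, W₂₂ ω, Z₁ ω, Z₂₁ ω, Z₂₂ ω)) with hTdef
  have hT : Measurable T :=
    hW₁.prodMk (hW₂₁.prodMk (hW₂₂.prodMk (hZ₁.prodMk (hZ₂₁.prodMk hZ₂₂))))
  have hp : ∀ v, 0 ≤ pdist μ T v := pdist_nonneg μ T
  have hs : ∑ v, pdist μ T v = 1 := sum_pdist μ T hT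
  -- translated leakage bounds
  have hl1 : MIp (pdist μ T) (fun v : G × S × G × T₁ × T₂ × T₃ => v.1) (fun v : G × S × G × T₁ × T₂ × T₃ => v.2.2.2.1) ≤ ε :=
    (finMutualInfo_eq μ T hT (fun v : G × S × G × T₁ × T₂ × T₃ => v.1) (fun v : G × S × G × T₁ × T₂ × T₃ => v.2.2.2.1)).symm.trans_le hleak1
  have hl2 : MIp (pdist μ T) (fun v : G × S × G × T₁ × T₂ × T₃ => v.2.1) (fun v : G × S × G × T₁ × T₂ × T₃ => v.2.2.2.2.1) ≤ ε :=
    (finMutualInfo_eq μ T hT (fun v : G × S × G × T₁ × T₂ × T₃ => v.2.1) (fun v : G × S × G × T₁ × T₂ × T₃ => v.2.2.2.2.1)).symm.trans_le hleak2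
  -- translated uniformity
  have hu : ∀ g : G, marg (pdist μ T) (fun v : G × S × G × T₁ × T₂ × T₃ => v.1) g = ((Fintype.card G : ℝ))⁻¹ := by
    intro g
    have e : marg (pdist μ T) (fun v : G × S × G × T₁ × T₂ × T₃ => v.1) g = (μ (W₁ ⁻¹' {g})).toReal := marg_eq μ T hT (fun v : G × S × G × T₁ × T₂ × T₃ => v.1) g
    rw [e, hunif g, ENNReal.toReal_inv]
    simp
  -- translated mutual independence
  have hmut : ∀ (g : G) (s : S) (g' : G),
      marg (pdist μ T) (fun v : G × S × G × T₁ × T₂ × T₃ => (v.1, v.2.1, v.2.2.1)) (g, s, g')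
        = marg (pdist μ T) (fun v : G × S × G × T₁ × T₂ × T₃ => v.1) g * marg (pdist μ T) (fun v : G × S × G × T₁ × T₂ × T₃ => v.2.1) s * marg (pdist μ T) (fun v : G × S × G × T₁ × T₂ × T₃ => v.2.2.1) g' := by
    intro g s g'
    have e0 : marg (pdist μ T) (fun v : G × S × G × T₁ × T₂ × T₃ => (v.1, v.2.1, v.2.2.1)) (g, s, g')
        = (μ (W₁ ⁻¹' {g} ∩ W₂₁ ⁻¹' {s} ∩ W₂₂ ⁻¹' {g'})).toReal := by
      rw [marg_eq μ T hT (fun v : G × S × G × T₁ × T₂ × T₃ => (v.1, v.2.1, v.2.2.1)) (g, s, g')]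
      have hset : ((fun ω => ((T ω).1, (T ω).2.1, (T ω).2.2.1)) ⁻¹' {(g, s, g')})
          = W₁ ⁻¹' {g} ∩ W₂₁ ⁻¹' {s} ∩ W₂₂ ⁻¹' {g'} := by
        ext ω
        simp [hTdef, Prod.ext_iff, and_assoc]
      rw [hset]
    rw [e0, hmutind g s g', ENNReal.toReal_mul, ENNReal.toReal_mul,
      marg_eq μ T hT (fun v : G × S × G × T₁ × T₂ × T₃ => v.1) g, marg_eq μ T hT (fun v : G × S × G × T₁ × T₂ × T₃ => v.2.1) s, marg_eq μ T hT (fun v : G × S × G × T₁ × T₂ × T₃ => v.2.2.1) g']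
  -- translated conditional independencies
  have F3 := condIndep_marg μ T hT (fun v : G × S × G × T₁ × T₂ × T₃ => v.2.2.2.1) (fun v : G × S × G × T₁ × T₂ × T₃ => (v.2.1, v.2.2.1, v.2.2.2.2.1, v.2.2.2.2.2)) (fun v : G × S × G × T₁ × T₂ × T₃ => v.1) hch1
  have F4 := condIndep_marg μ T hT (fun v : G × S × G × T₁ × T₂ × T₃ => v.2.2.2.2.1) (fun v : G × S × G × T₁ × T₂ × T₃ => (v.1, v.2.2.1, v.2.2.2.1, v.2.2.2.2.2)) (fun v : G × S × G × T₁ × T₂ × T₃ => v.2.1) hch2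
  have F5 := condIndep_marg μ T hT (fun v : G × S × G × T₁ × T₂ × T₃ => v.2.2.2.2.2) (fun v : G × S × G × T₁ × T₂ × T₃ => (v.1, v.2.1, v.2.2.1, v.2.2.2.1, v.2.2.2.2.1)) (fun v : G × S × G × T₁ × T₂ × T₃ => v.2.2.1 + v.1) hch3
  -- derived conditional independencies
  have D1 := CI_master hp F3
    (fun b c0 => ((b.1, b.2.1), (b.2.2.1, b.2.1 + c0))) (fun _ c0 => c0)
    (fun c0 => c0) (fun v => rfl)
  have D2 := CI_master hp F4
    (fun b _ => (b.2.1, b.2.1 + b.1)) (fun _ c0 => c0)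
    (fun c0 => c0) (fun v => rfl)
  have D3 := CI_master hp F5
    (fun b _ => (b.2.1, b.2.2.1)) (fun b c0 => (b.2.2.2.1, b.2.2.2.2, c0))
    (fun z => z.2.2) (fun v => rfl)
  dsimp only at D1 D2 D3
  have C1 : CIp (pdist μ T) (fun v : G × S × G × T₁ × T₂ × T₃ => v.2.2.2.1) (fun v : G × S × G × T₁ × T₂ × T₃ => ((v.2.1, v.2.2.1), v.2.2.2.2.1, v.2.2.1 + v.1)) (fun v : G × S × G × T₁ × T₂ × T₃ => v.1) = 0 := CIp_eq_zero hp D1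
  have C2 : CIp (pdist μ T) (fun v : G × S × G × T₁ × T₂ × T₃ => v.2.2.2.2.1) (fun v : G × S × G × T₁ × T₂ × T₃ => (v.2.2.1, v.2.2.1 + v.1)) (fun v : G × S × G × T₁ × T₂ × T₃ => v.2.1) = 0 := CIp_eq_zero hp D2
  have C3 : CIp (pdist μ T) (fun v : G × S × G × T₁ × T₂ × T₃ => v.2.2.2.2.2) (fun v : G × S × G × T₁ × T₂ × T₃ => (v.2.1, v.2.2.1)) (fun v : G × S × G × T₁ × T₂ × T₃ => (v.2.2.2.1, v.2.2.2.2.1, v.2.2.1 + v.1)) = 0 := CIp_eq_zero hp D3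
  -- one-time-pad computations
  have hm_marg : ∀ (s0 : S) (g0 : G),
      marg (pdist μ T) (fun v : G × S × G × T₁ × T₂ × T₃ => (v.2.1, v.2.2.1)) (s0, g0) = marg (pdist μ T) (fun v : G × S × G × T₁ × T₂ × T₃ => v.2.1) s0 * marg (pdist μ T) (fun v : G × S × G × T₁ × T₂ × T₃ => v.2.2.1) g0 := by
    intro s0 g0
    rw [marg_snd (fun v : G × S × G × T₁ × T₂ × T₃ => v.1) (fun v : G × S × G × T₁ × T₂ × T₃ => (v.2.1, v.2.2.1)) (s0, g0)]
    rw [Finset.sum_congr rfl (fun g _ => hmut g s0 g0)]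
    rw [← Finset.sum_mul, ← Finset.sum_mul, sum_marg, hs, one_mul]
  have hc_marg : ∀ g0 : G, marg (pdist μ T) (fun v : G × S × G × T₁ × T₂ × T₃ => v.2.2.1 + v.1) g0 = ((Fintype.card G : ℝ))⁻¹ := by
    intro g0
    have e := marg_comp (p := (pdist μ T)) (fun x : G × S × G => x.2.2 + x.1) (fun v : G × S × G × T₁ × T₂ × T₃ => (v.1, v.2.1, v.2.2.1)) g0
    dsimp only at e
    rw [e]
    simp only [Fintype.sum_prod_type]
    simp only [hmut, hu]
    rw [sum3_bca]
    have inner : ∀ (x2 : S) (x3 : G),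
        (∑ x1 : G, if x3 + x1 = g0 then
            ((Fintype.card G : ℝ))⁻¹ * marg (pdist μ T) (fun v : G × S × G × T₁ × T₂ × T₃ => v.2.1) x2
              * marg (pdist μ T) (fun v : G × S × G × T₁ × T₂ × T₃ => v.2.2.1) x3 else 0)
          = ((Fintype.card G : ℝ))⁻¹ * marg (pdist μ T) (fun v : G × S × G × T₁ × T₂ × T₃ => v.2.1) x2
              * marg (pdist μ T) (fun v : G × S × G × T₁ × T₂ × T₃ => v.2.2.1) x3 := by
      intro x2 x3
      rw [Finset.sum_eq_single_of_mem (-x3 + g0) (Finset.mem_univ _)]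
      · exact if_pos (add_neg_cancel_left x3 g0)
      · intro x1 _ hne
        exact if_neg fun h => hne (by rw [← h, neg_add_cancel_left])
    simp only [inner]
    have inner2 : ∀ x2 : S,
        (∑ x3 : G, ((Fintype.card G : ℝ))⁻¹ * marg (pdist μ T) (fun v : G × S × G × T₁ × T₂ × T₃ => v.2.1) x2
            * marg (pdist μ T) (fun v : G × S × G × T₁ × T₂ × T₃ => v.2.2.1) x3)
          = ((Fintype.card G : ℝ))⁻¹ * marg (pdist μ T) (fun v : G × S × G × T₁ × T₂ × T₃ => v.2.1) x2 := by
      intro x2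
      rw [← Finset.mul_sum, sum_marg, hs, mul_one]
    simp only [inner2]
    rw [← Finset.mul_sum, sum_marg, hs, mul_one]
  have hmc_marg : ∀ (s0 : S) (g0' g0 : G),
      marg (pdist μ T) (fun v : G × S × G × T₁ × T₂ × T₃ => ((v.2.1, v.2.2.1), v.2.2.1 + v.1)) ((s0, g0'), g0)
        = ((Fintype.card G : ℝ))⁻¹ * marg (pdist μ T) (fun v : G × S × G × T₁ × T₂ × T₃ => v.2.1) s0 * marg (pdist μ T) (fun v : G × S × G × T₁ × T₂ × T₃ => v.2.2.1) g0' := by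
    intro s0 g0' g0
    have e := marg_comp (p := (pdist μ T))
      (fun x : G × S × G => ((x.2.1, x.2.2), x.2.2 + x.1)) (fun v : G × S × G × T₁ × T₂ × T₃ => (v.1, v.2.1, v.2.2.1)) ((s0, g0'), g0)
    dsimp only at e
    rw [e]
    rw [Finset.sum_eq_single_of_mem ((-g0' + g0, s0, g0') : G × S × G) (Finset.mem_univ _)]
    · rw [if_pos (by rw [add_neg_cancel_left]), hmut, hu]
    · intro x _ hne
      refine if_neg fun h => hne ?_
      have h' := h
      simp only [Prod.mk.injEq] at h'
      obtain ⟨⟨h1, h2⟩, h3⟩ := h'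
      have hx1 : x.1 = -g0' + g0 := by
        rw [← h3, ← h2, neg_add_cancel_left]
      rw [show x = (x.1, x.2.1, x.2.2) from rfl, hx1, h1, h2]
  have hMIc0 : MIp (pdist μ T) (fun v : G × S × G × T₁ × T₂ × T₃ => (v.2.1, v.2.2.1)) (fun v : G × S × G × T₁ × T₂ × T₃ => v.2.2.1 + v.1) = 0 := by
    refine MIp_indep hs ?_
    rintro ⟨s0, g0'⟩ g0
    rw [hmc_marg s0 g0' g0, hm_marg s0 g0', hc_marg g0]
    ring
  -- rewrite the goal
  have hgoal : finMutualInfo μ (fun ω => (W₂₁ ω, W₂₂ ω))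
      (fun ω => (Z₁ ω, Z₂₁ ω, Z₂₂ ω)) = MIp (pdist μ T) (fun v : G × S × G × T₁ × T₂ × T₃ => (v.2.1, v.2.2.1)) (fun v : G × S × G × T₁ × T₂ × T₃ => (v.2.2.2.1, v.2.2.2.2.1, v.2.2.2.2.2)) :=
    finMutualInfo_eq μ T hT (fun v : G × S × G × T₁ × T₂ × T₃ => (v.2.1, v.2.2.1)) (fun v : G × S × G × T₁ × T₂ × T₃ => (v.2.2.2.1, v.2.2.2.2.1, v.2.2.2.2.2))
  rw [hgoal]
  -- chain of (in)equalities
  have ha := chainRule (p := (pdist μ T)) (fun v : G × S × G × T₁ × T₂ × T₃ => (v.2.1, v.2.2.1)) (fun v : G × S × G × T₁ × T₂ × T₃ => v.2.2.1 + v.1) (fun v : G × S × G × T₁ × T₂ × T₃ => (v.2.2.2.1, v.2.2.2.2.1, v.2.2.2.2.2))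
  have ha' := CIp_nonneg hp hs (fun v : G × S × G × T₁ × T₂ × T₃ => (v.2.1, v.2.2.1)) (fun v : G × S × G × T₁ × T₂ × T₃ => v.2.2.1 + v.1) (fun v : G × S × G × T₁ × T₂ × T₃ => (v.2.2.2.1, v.2.2.2.2.1, v.2.2.2.2.2))
  have hb : MIp (pdist μ T) (fun v : G × S × G × T₁ × T₂ × T₃ => (v.2.1, v.2.2.1)) (fun v : G × S × G × T₁ × T₂ × T₃ => (v.2.2.1 + v.1, v.2.2.2.1, v.2.2.2.2.1, v.2.2.2.2.2))
      = MIp (pdist μ T) (fun v : G × S × G × T₁ × T₂ × T₃ => (v.2.1, v.2.2.1)) (fun v : G × S × G × T₁ × T₂ × T₃ => (v.2.2.2.2.2, v.2.2.2.1, v.2.2.2.2.1, v.2.2.1 + v.1)) := by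
    refine MIp_congr_right _ ?_
    intro v w
    simp only [Prod.ext_iff]
    tauto
  have hc := chainRule (p := (pdist μ T)) (fun v : G × S × G × T₁ × T₂ × T₃ => (v.2.1, v.2.2.1)) (fun v : G × S × G × T₁ × T₂ × T₃ => v.2.2.2.2.2) (fun v : G × S × G × T₁ × T₂ × T₃ => (v.2.2.2.1, v.2.2.2.2.1, v.2.2.1 + v.1))
  have hd : CIp (pdist μ T) (fun v : G × S × G × T₁ × T₂ × T₃ => (v.2.1, v.2.2.1)) (fun v : G × S × G × T₁ × T₂ × T₃ => v.2.2.2.2.2) (fun v : G × S × G × T₁ × T₂ × T₃ => (v.2.2.2.1, v.2.2.2.2.1, v.2.2.1 + v.1)) = 0 := by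
    rw [CIp_symm]
    exact C3
  have he := chainRule (p := (pdist μ T)) (fun v : G × S × G × T₁ × T₂ × T₃ => (v.2.1, v.2.2.1)) (fun v : G × S × G × T₁ × T₂ × T₃ => v.2.2.2.1) (fun v : G × S × G × T₁ × T₂ × T₃ => (v.2.2.2.2.1, v.2.2.1 + v.1))
  have hf := chainRule (p := (pdist μ T)) (fun v : G × S × G × T₁ × T₂ × T₃ => (v.2.1, v.2.2.1)) (fun v : G × S × G × T₁ × T₂ × T₃ => v.2.2.2.2.1) (fun v : G × S × G × T₁ × T₂ × T₃ => v.2.2.1 + v.1)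
  -- bound CIp Mf Z21 Cf
  have hh1 := chainRule (p := (pdist μ T)) (fun v : G × S × G × T₁ × T₂ × T₃ => v.2.2.2.2.1) (fun v : G × S × G × T₁ × T₂ × T₃ => (v.2.1, v.2.2.1)) (fun v : G × S × G × T₁ × T₂ × T₃ => v.2.2.1 + v.1)
  have hh2 := MIp_nonneg hp hs (fun v : G × S × G × T₁ × T₂ × T₃ => v.2.2.2.2.1) (fun v : G × S × G × T₁ × T₂ × T₃ => v.2.2.1 + v.1)
  have hh3 : MIp (pdist μ T) (fun v : G × S × G × T₁ × T₂ × T₃ => v.2.2.2.2.1) (fun v : G × S × G × T₁ × T₂ × T₃ => ((v.2.1, v.2.2.1), v.2.2.1 + v.1))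
      = MIp (pdist μ T) (fun v : G × S × G × T₁ × T₂ × T₃ => v.2.2.2.2.1) (fun v : G × S × G × T₁ × T₂ × T₃ => ((v.2.2.1, v.2.2.1 + v.1), v.2.1)) := by
    refine MIp_congr_right _ ?_
    intro v w
    simp only [Prod.ext_iff]
    tauto
  have hh4 := chainRule (p := (pdist μ T)) (fun v : G × S × G × T₁ × T₂ × T₃ => v.2.2.2.2.1) (fun v : G × S × G × T₁ × T₂ × T₃ => (v.2.2.1, v.2.2.1 + v.1)) (fun v : G × S × G × T₁ × T₂ × T₃ => v.2.1)
  have hl2' : MIp (pdist μ T) (fun v : G × S × G × T₁ × T₂ × T₃ => v.2.2.2.2.1) (fun v : G × S × G × T₁ × T₂ × T₃ => v.2.1) ≤ ε :=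
    (MIp_symm (fun v : G × S × G × T₁ × T₂ × T₃ => v.2.2.2.2.1) (fun v : G × S × G × T₁ × T₂ × T₃ => v.2.1)).trans_le hl2
  have hh : CIp (pdist μ T) (fun v : G × S × G × T₁ × T₂ × T₃ => (v.2.1, v.2.2.1)) (fun v : G × S × G × T₁ × T₂ × T₃ => v.2.2.2.2.1) (fun v : G × S × G × T₁ × T₂ × T₃ => v.2.2.1 + v.1) ≤ ε := by
    rw [CIp_symm]
    linarith [hl2]
  -- bound CIp Mf Z1 Z21c
  have hi1 := chainRule (p := (pdist μ T)) (fun v : G × S × G × T₁ × T₂ × T₃ => v.2.2.2.1) (fun v : G × S × G × T₁ × T₂ × T₃ => (v.2.1, v.2.2.1)) (fun v : G × S × G × T₁ × T₂ × T₃ => (v.2.2.2.2.1, v.2.2.1 + v.1))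
  have hi2 := MIp_nonneg hp hs (fun v : G × S × G × T₁ × T₂ × T₃ => v.2.2.2.1) (fun v : G × S × G × T₁ × T₂ × T₃ => (v.2.2.2.2.1, v.2.2.1 + v.1))
  have hi3 := chainRule (p := (pdist μ T)) (fun v : G × S × G × T₁ × T₂ × T₃ => v.2.2.2.1) (fun v : G × S × G × T₁ × T₂ × T₃ => v.1) (fun v : G × S × G × T₁ × T₂ × T₃ => ((v.2.1, v.2.2.1), v.2.2.2.2.1, v.2.2.1 + v.1))
  have hi4 := CIp_nonneg hp hs (fun v : G × S × G × T₁ × T₂ × T₃ => v.2.2.2.1) (fun v : G × S × G × T₁ × T₂ × T₃ => v.1) (fun v : G × S × G × T₁ × T₂ × T₃ => ((v.2.1, v.2.2.1), v.2.2.2.2.1, v.2.2.1 + v.1))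
  have hi5 : MIp (pdist μ T) (fun v : G × S × G × T₁ × T₂ × T₃ => v.2.2.2.1) (fun v : G × S × G × T₁ × T₂ × T₃ => (v.1, ((v.2.1, v.2.2.1), v.2.2.2.2.1, v.2.2.1 + v.1)))
      = MIp (pdist μ T) (fun v : G × S × G × T₁ × T₂ × T₃ => v.2.2.2.1) (fun v : G × S × G × T₁ × T₂ × T₃ => (((v.2.1, v.2.2.1), v.2.2.2.2.1, v.2.2.1 + v.1), v.1)) := by
    refine MIp_congr_right _ ?_
    intro v w
    simp only [Prod.ext_iff]
    tauto
  have hi6 := chainRule (p := (pdist μ T)) (fun v : G × S × G × T₁ × T₂ × T₃ => v.2.2.2.1) (fun v : G × S × G × T₁ × T₂ × T₃ => ((v.2.1, v.2.2.1), v.2.2.2.2.1, v.2.2.1 + v.1)) (fun v : G × S × G × T₁ × T₂ × T₃ => v.1)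
  have hl1' : MIp (pdist μ T) (fun v : G × S × G × T₁ × T₂ × T₃ => v.2.2.2.1) (fun v : G × S × G × T₁ × T₂ × T₃ => v.1) ≤ ε :=
    (MIp_symm (fun v : G × S × G × T₁ × T₂ × T₃ => v.2.2.2.1) (fun v : G × S × G × T₁ × T₂ × T₃ => v.1)).trans_le hl1
  have hi : CIp (pdist μ T) (fun v : G × S × G × T₁ × T₂ × T₃ => (v.2.1, v.2.2.1)) (fun v : G × S × G × T₁ × T₂ × T₃ => v.2.2.2.1) (fun v : G × S × G × T₁ × T₂ × T₃ => (v.2.2.2.2.1, v.2.2.1 + v.1)) ≤ ε := by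
    rw [CIp_symm]
    linarith [hl1]
  linarith [ha, ha', hb, hc, hd, he, hf, hMIc0, hh, hi]
end
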